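/- arXiv:1511.02775 — 7 statements merged into one kernel-verified Lean document; each statement's English description precedes it below -/
import Mathlib

section
/- Let F be a continuous cdf with right tail index α_+(F) ∈ (0, +∞). Then E_F[X_+^{α_+(F) - δ}] < +∞ for every 0 < δ ≤ α_+(F), and E_F[X_+^{α_+(F) + δ}] = +∞ for every δ > 0. -/
open MeasureTheory Filter Set
open scoped ENNReal

lemma tail_est (μ : Measure ℝ) [IsProbabilityMeasure μ]
    (F : ℝ → ℝ) (hF : ∀ x, F x = (μ (Set.Iic x)).toReal)
    (α : ℝ) (htail : Tendsto (fun x : ℝ => -Real.log (1 - F x) / Real.log x) atTop (nhds α))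
    (ε : ℝ) (hε : 0 < ε) (hεα : ε < α) :
    ∃ T : ℝ, 2 ≤ T ∧ ∀ x, T ≤ x →
      μ (Set.Ioi x) ≤ ENNReal.ofReal (x ^ (-(α - ε))) ∧
      ENNReal.ofReal (x ^ (-(α + ε))) ≤ μ (Set.Ioi x) := by
  have hF1 : ∀ x, F x ≤ 1 := by
    intro x
    rw [hF]
    have h := prob_le_one (μ := μ) (s := Set.Iic x)
    have := ENNReal.toReal_mono ENNReal.one_ne_top h
    simpa using this
  have hμIoi : ∀ x, μ (Set.Ioi x) = ENNReal.ofReal (1 - F x) := by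
    intro x
    have hIic : μ (Set.Iic x) = ENNReal.ofReal (F x) := by
      rw [hF x, ENNReal.ofReal_toReal (measure_ne_top μ _)]
    rw [← Set.compl_Iic, measure_compl measurableSet_Iic (measure_ne_top μ _), measure_univ,
      hIic, ← ENNReal.ofReal_one, ← ENNReal.ofReal_sub]
    rw [hF]; exact ENNReal.toReal_nonneg
  have hev : ∀ᶠ x : ℝ in atTop,
      (-Real.log (1 - F x) / Real.log x ∈ Set.Ioo (α - ε) (α + ε)) ∧ 2 ≤ x :=
    (htail.eventually (Ioo_mem_nhds (by linarith) (by linarith))).and (eventually_ge_atTop 2)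
  obtain ⟨T₀, hT₀⟩ := eventually_atTop.mp hev
  refine ⟨max T₀ 2, le_max_right _ _, fun x hx => ?_⟩
  obtain ⟨hr, hx2⟩ := hT₀ x (le_trans (le_max_left _ _) hx)
  have hx0 : (0:ℝ) < x := by linarith
  have hlog : 0 < Real.log x := Real.log_pos (by linarith)
  have h1 : (α - ε) * Real.log x < -Real.log (1 - F x) := (lt_div_iff₀ hlog).mp hr.1
  have h2 : -Real.log (1 - F x) < (α + ε) * Real.log x := (div_lt_iff₀ hlog).mp hr.2
  have hpos : 0 < 1 - F x := by
    by_contra h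
    push_neg at h
    have h0 : 1 - F x = 0 := le_antisymm h (by have := hF1 x; linarith)
    rw [h0, Real.log_zero] at h1
    nlinarith [mul_pos (by linarith : (0:ℝ) < α - ε) hlog]
  have hub : 1 - F x < x ^ (-(α - ε)) := by
    calc 1 - F x = Real.exp (Real.log (1 - F x)) := (Real.exp_log hpos).symm
      _ < Real.exp (Real.log x * (-(α - ε))) := Real.exp_lt_exp.mpr (by nlinarith)
      _ = x ^ (-(α - ε)) := (Real.rpow_def_of_pos hx0 _).symm
  have hlb : x ^ (-(α + ε)) < 1 - F x := by
    calc x ^ (-(α + ε)) = Real.exp (Real.log x * (-(α + ε))) := Real.rpow_def_of_pos hx0 _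
      _ < Real.exp (Real.log (1 - F x)) := Real.exp_lt_exp.mpr (by nlinarith)
      _ = 1 - F x := Real.exp_log hpos
  rw [hμIoi x]
  exact ⟨ENNReal.ofReal_le_ofReal hub.le, ENNReal.ofReal_le_ofReal hlb.le⟩

theorem stmt_3 (μ : Measure ℝ) [IsProbabilityMeasure μ]
    (F : ℝ → ℝ) (hF : ∀ x, F x = (μ (Set.Iic x)).toReal) (hcont : Continuous F)
    (α : ℝ) (hα : 0 < α)
    (htail : Tendsto (fun x : ℝ => -Real.log (1 - F x) / Real.log x) atTop (nhds α)) :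
    (∀ δ : ℝ, 0 < δ → δ ≤ α → ∫⁻ x, ENNReal.ofReal ((max x 0) ^ (α - δ)) ∂μ < ⊤) ∧
    (∀ δ : ℝ, 0 < δ → ∫⁻ x, ENNReal.ofReal ((max x 0) ^ (α + δ)) ∂μ = ⊤) := by
  constructor
  · -- finiteness
    intro δ hδ hδα
    rcases eq_or_lt_of_le hδα with h | h
    · subst h
      simp only [sub_self, Real.rpow_zero, ENNReal.ofReal_one, lintegral_one, measure_univ]
      exact ENNReal.one_lt_top
    · set p := α - δ with hp_def
      have hp : 0 < p := by simp only [hp_def]; linarith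
      have mble : AEMeasurable (fun x : ℝ => max x 0) μ :=
        (measurable_id.max measurable_const).aemeasurable
      rw [lintegral_rpow_eq_lintegral_meas_le_mul μ
        (Eventually.of_forall fun x => le_max_right x 0) mble hp]
      refine ENNReal.mul_lt_top ENNReal.ofReal_lt_top ?_
      obtain ⟨T, hT2, hT⟩ := tail_est μ F hF α htail (δ/2) (by linarith) (by linarith)
      set β := α - δ/2 with hβ_def
      have hsplit : Set.Ioi (0:ℝ) = Set.Ioc 0 (2*T) ∪ Set.Ioi (2*T) :=
        (Set.Ioc_union_Ioi_eq_Ioi (by linarith)).symm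
      rw [hsplit]
      refine lt_of_le_of_lt (lintegral_union_le _ _ _) ?_
      refine ENNReal.add_lt_top.mpr ⟨?_, ?_⟩
      · -- near 0
        have hint : IntegrableOn (fun t : ℝ => t ^ (p - 1)) (Set.Ioc 0 (2*T)) := by
          rw [← intervalIntegrable_iff_integrableOn_Ioc_of_le (by linarith : (0:ℝ) ≤ 2*T)]
          exact intervalIntegral.intervalIntegrable_rpow' (by linarith)
        refine lt_of_le_of_lt (setLIntegral_mono (by fun_prop) ?_) hint.lintegral_lt_top
        intro t _
        calc μ {a : ℝ | t ≤ max a 0} * ENNReal.ofReal (t ^ (p - 1))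
            ≤ 1 * ENNReal.ofReal (t ^ (p - 1)) := mul_le_mul_left prob_le_one _
          _ = ENNReal.ofReal (t ^ (p - 1)) := one_mul _
      · -- tail
        have hint : IntegrableOn (fun t : ℝ => (2:ℝ) ^ β * t ^ (p - 1 - β)) (Set.Ioi (2*T)) := by
          refine Integrable.const_mul ?_ _
          exact (integrableOn_Ioi_rpow_iff (by linarith)).mpr (by simp only [hp_def, hβ_def]; linarith)
        refine lt_of_le_of_lt (setLIntegral_mono (by fun_prop) ?_) hint.lintegral_lt_top
        intro t ht
        have ht2T : 2*T < t := ht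
        have ht0 : (0:ℝ) < t := by linarith
        have hTt : T ≤ t/2 := by linarith
        have hsub : {a : ℝ | t ≤ max a 0} ⊆ Set.Ioi (t/2) := by
          intro a ha
          simp only [Set.mem_setOf_eq] at ha
          simp only [Set.mem_Ioi]
          rcases le_total a 0 with h' | h'
          · rw [max_eq_right h'] at ha; linarith
          · rw [max_eq_left h'] at ha; linarith
        have hbound : μ {a : ℝ | t ≤ max a 0} ≤ ENNReal.ofReal ((t/2) ^ (-β)) := by
          calc μ {a : ℝ | t ≤ max a 0} ≤ μ (Set.Ioi (t/2)) := measure_mono hsub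
            _ ≤ ENNReal.ofReal ((t/2) ^ (-(α - δ/2))) := (hT (t/2) hTt).1
        have halg : (t/2) ^ (-β) * t ^ (p - 1) = (2:ℝ) ^ β * t ^ (p - 1 - β) := by
          rw [Real.div_rpow ht0.le (by norm_num), Real.rpow_neg (by norm_num : (0:ℝ) ≤ 2),
            div_inv_eq_mul]
          have e2 : t ^ (-β) * t ^ (p - 1) = t ^ (p - 1 - β) := by
            rw [← Real.rpow_add ht0]; congr 1; ring
          calc t ^ (-β) * 2 ^ β * t ^ (p - 1) = 2 ^ β * (t ^ (-β) * t ^ (p - 1)) := by ring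
            _ = 2 ^ β * t ^ (p - 1 - β) := by rw [e2]
        calc μ {a : ℝ | t ≤ max a 0} * ENNReal.ofReal (t ^ (p - 1))
            ≤ ENNReal.ofReal ((t/2) ^ (-β)) * ENNReal.ofReal (t ^ (p - 1)) :=
              mul_le_mul_left hbound _
          _ = ENNReal.ofReal ((t/2) ^ (-β) * t ^ (p - 1)) :=
              (ENNReal.ofReal_mul (Real.rpow_nonneg (by linarith) _)).symm
          _ = ENNReal.ofReal ((2:ℝ) ^ β * t ^ (p - 1 - β)) := by rw [halg]
  · -- divergence
    intro δ hδ
    set ε := min (δ/2) (α/2) with hεdef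
    have hε : 0 < ε := lt_min (by linarith) (by linarith)
    have hεα : ε < α := lt_of_le_of_lt (min_le_right _ _) (by linarith)
    have hεδ : ε < δ := lt_of_le_of_lt (min_le_left _ _) (by linarith)
    obtain ⟨T, hT2, hT⟩ := tail_est μ F hF α htail ε hε hεα
    have key : ∀ t, T ≤ t →
        ENNReal.ofReal (t ^ (δ - ε)) ≤ ∫⁻ x, ENNReal.ofReal ((max x 0) ^ (α + δ)) ∂μ := by
      intro t ht
      have ht0 : (0:ℝ) < t := by linarith
      have step1 : ENNReal.ofReal (t ^ (α + δ)) * μ (Set.Ioi t)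
          ≤ ∫⁻ x, ENNReal.ofReal ((max x 0) ^ (α + δ)) ∂μ := by
        calc ENNReal.ofReal (t ^ (α + δ)) * μ (Set.Ioi t)
            = ∫⁻ _ in Set.Ioi t, ENNReal.ofReal (t ^ (α + δ)) ∂μ := (setLIntegral_const _ _).symm
          _ ≤ ∫⁻ x in Set.Ioi t, ENNReal.ofReal ((max x 0) ^ (α + δ)) ∂μ := by
              refine setLIntegral_mono (by fun_prop) ?_
              intro x hx
              refine ENNReal.ofReal_le_ofReal ?_
              exact Real.rpow_le_rpow ht0.le (le_trans (le_of_lt hx) (le_max_left x 0))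
                (by linarith)
          _ ≤ ∫⁻ x, ENNReal.ofReal ((max x 0) ^ (α + δ)) ∂μ := setLIntegral_le_lintegral _ _
      have heq : ENNReal.ofReal (t ^ (α + δ)) * ENNReal.ofReal (t ^ (-(α + ε)))
          = ENNReal.ofReal (t ^ (δ - ε)) := by
        rw [← ENNReal.ofReal_mul (Real.rpow_nonneg ht0.le _), ← Real.rpow_add ht0]
        congr 1
        ring
      calc ENNReal.ofReal (t ^ (δ - ε))
          = ENNReal.ofReal (t ^ (α + δ)) * ENNReal.ofReal (t ^ (-(α + ε))) := heq.symm
        _ ≤ ENNReal.ofReal (t ^ (α + δ)) * μ (Set.Ioi t) := mul_le_mul_right (hT t ht).2 _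
        _ ≤ _ := step1
    refine eq_top_iff.mpr ?_
    rw [← ENNReal.iSup_natCast]
    refine iSup_le fun n => ?_
    have hq : 0 < δ - ε := by linarith
    set t := max T ((n:ℝ) ^ (δ - ε)⁻¹) with htdef
    have hn0 : (0:ℝ) ≤ (n:ℝ) := n.cast_nonneg
    have h1 : (n:ℝ) ≤ t ^ (δ - ε) := by
      have e : ((n:ℝ) ^ (δ - ε)⁻¹) ^ (δ - ε) = (n:ℝ) := by
        rw [← Real.rpow_mul hn0, inv_mul_cancel₀ hq.ne', Real.rpow_one]
      calc (n:ℝ) = ((n:ℝ) ^ (δ - ε)⁻¹) ^ (δ - ε) := e.symm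
        _ ≤ t ^ (δ - ε) := Real.rpow_le_rpow (Real.rpow_nonneg hn0 _)
            (le_max_right _ _) hq.le
    calc (n : ℝ≥0∞) = ENNReal.ofReal (n:ℝ) := (ENNReal.ofReal_natCast n).symm
      _ ≤ ENNReal.ofReal (t ^ (δ - ε)) := ENNReal.ofReal_le_ofReal h1
      _ ≤ _ := key t (le_max_left _ _)
end

section
/- Let k be a probability density on ℝ with cdf K, let G be a probability measure on ℝ × ℝ⁺ (location-scale pairs (μ,σ)), and let f(x) = ∫ (1/σ) k((x-μ)/σ) dG(μ,σ) with cdf F. Then for any m > 0, E_F[X_+^m] ≥ c_m · (E_{G_μ}[μ_+^m] · (1-K(0)) + E_K[X_+^m] · E_G[σ^m · 1(μ ≥ 0)]), where c_m = min(1, 2^{m-1}) and G_μ is the marginal of G in μ. -/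
open MeasureTheory Filter Set
open scoped ENNReal NNReal

lemma key_nn {p : ℝ} (hp : 0 < p) (a b : ℝ≥0) :
    min 1 (2 ^ (p - 1)) * (a ^ p + b ^ p) ≤ (a + b) ^ p := by
  rcases le_or_gt 1 p with h1 | h1
  · refine le_trans (mul_le_mul_left (min_le_left _ _) _) ?_
    rw [one_mul]
    exact NNReal.add_rpow_le_rpow_add a b h1
  · have h2 : (2 : ℝ≥0) ^ (p - 1) ≤ 1 :=
      NNReal.rpow_le_one_of_one_le_of_nonpos (by norm_num) (by linarith)
    rw [min_eq_right h2]
    have hq : 1 ≤ 1 / p := by rw [le_div_iff₀ hp]; linarith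
    have key := NNReal.rpow_add_le_mul_rpow_add_rpow (a ^ p) (b ^ p) hq
    rw [← NNReal.rpow_mul, ← NNReal.rpow_mul, mul_one_div_cancel hp.ne', NNReal.rpow_one,
      NNReal.rpow_one] at key
    have key2 := NNReal.rpow_le_rpow key hp.le
    rw [← NNReal.rpow_mul, one_div, inv_mul_cancel₀ hp.ne', NNReal.rpow_one,
      NNReal.mul_rpow, ← NNReal.rpow_mul] at key2
    have hexp : (p⁻¹ - 1) * p = 1 - p := by field_simp
    rw [hexp] at key2
    calc (2 : ℝ≥0) ^ (p - 1) * (a ^ p + b ^ p)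
        ≤ 2 ^ (p - 1) * (2 ^ (1 - p) * (a + b) ^ p) := mul_le_mul_right key2 _
      _ = (a + b) ^ p := by
          rw [← mul_assoc, ← NNReal.rpow_add (by norm_num)]
          norm_num

lemma key_real {p : ℝ} (hp : 0 < p) {a b : ℝ} (ha : 0 ≤ a) (hb : 0 ≤ b) :
    min 1 (2 ^ (p - 1)) * (a ^ p + b ^ p) ≤ (a + b) ^ p := by
  lift a to ℝ≥0 using ha
  lift b to ℝ≥0 using hb
  have h := key_nn hp a b
  have := NNReal.coe_le_coe.mpr h
  push_cast at this
  convert this using 3 <;> norm_num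

lemma change_var {g : ℝ → ℝ≥0∞} (hg : Measurable g) {μ σ : ℝ} (hσ : 0 < σ) :
    ∫⁻ x, g x = ENNReal.ofReal σ * ∫⁻ y, g (μ + σ * y) := by
  have hmap : ∫⁻ y, g (μ + σ * y) = ∫⁻ z, g (μ + z) ∂(Measure.map (σ * ·) volume) := by
    rw [lintegral_map (by exact hg.comp (measurable_const_add μ)) (measurable_const_mul σ)]
  rw [hmap, Real.map_volume_mul_left hσ.ne', lintegral_smul_measure,
    lintegral_add_left_eq_self g μ, abs_of_pos (inv_pos.mpr hσ), smul_eq_mul, ← mul_assoc,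
    ← ENNReal.ofReal_mul hσ.le, mul_inv_cancel₀ hσ.ne', ENNReal.ofReal_one, one_mul]

lemma inner_eq {k : ℝ → ℝ} (hk_meas : Measurable k) {m : ℝ} {μ σ : ℝ} (hσ : 0 < σ) :
    ∫⁻ x, ENNReal.ofReal ((max x 0) ^ m) * ENNReal.ofReal ((1 / σ) * k ((x - μ) / σ)) =
    ∫⁻ y, ENNReal.ofReal ((max (μ + σ * y) 0) ^ m) * ENNReal.ofReal (k y) := by
  have h1 : ∀ x : ℝ, ENNReal.ofReal ((max x 0) ^ m) * ENNReal.ofReal ((1 / σ) * k ((x - μ) / σ))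
      = ENNReal.ofReal (1 / σ) *
        (ENNReal.ofReal ((max x 0) ^ m) * ENNReal.ofReal (k ((x - μ) / σ))) := by
    intro x
    rw [ENNReal.ofReal_mul (by positivity : (0:ℝ) ≤ 1 / σ)]
    ring
  simp_rw [h1]
  rw [lintegral_const_mul' _ _ ENNReal.ofReal_ne_top]
  have hgm : Measurable fun x : ℝ =>
      ENNReal.ofReal ((max x 0) ^ m) * ENNReal.ofReal (k ((x - μ) / σ)) := by
    apply Measurable.fun_mul
    · exact (((measurable_id.max measurable_const).pow_const m)).ennreal_ofReal
    · exact (hk_meas.comp ((measurable_id.sub_const μ).div_const σ)).ennreal_ofReal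
  rw [change_var (μ := μ) hgm hσ]
  have h2 : ∀ y : ℝ,
      ENNReal.ofReal ((max (μ + σ * y) 0) ^ m) * ENNReal.ofReal (k ((μ + σ * y - μ) / σ))
      = ENNReal.ofReal ((max (μ + σ * y) 0) ^ m) * ENNReal.ofReal (k y) := by
    intro y
    congr 3
    field_simp
    ring
  simp_rw [h2]
  rw [← mul_assoc, ← ENNReal.ofReal_mul (by positivity : (0:ℝ) ≤ 1 / σ), one_div,
    inv_mul_cancel₀ hσ.ne', ENNReal.ofReal_one, one_mul]

lemma pointwise_bound {k : ℝ → ℝ} (hk_nonneg : ∀ x, 0 ≤ k x) {m : ℝ} (hm : 0 < m)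
    {μ σ : ℝ} (hσ : 0 < σ) (y : ℝ) :
    ENNReal.ofReal (min 1 (2 ^ (m - 1))) *
      (ENNReal.ofReal ((max μ 0) ^ m) *
          (Set.Ici (0:ℝ)).indicator (fun y => ENNReal.ofReal (k y)) y +
        ({p : ℝ × ℝ | 0 ≤ p.1}.indicator (fun p => ENNReal.ofReal (p.2 ^ m)) (μ, σ)) *
          ENNReal.ofReal ((max y 0) ^ m * k y)) ≤
    ENNReal.ofReal ((max (μ + σ * y) 0) ^ m) * ENNReal.ofReal (k y) := by
  by_cases hy : 0 ≤ y
  · by_cases hμ : 0 ≤ μ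
    · rw [Set.indicator_of_mem (by exact hy : y ∈ Set.Ici (0:ℝ)),
        Set.indicator_of_mem (by exact hμ : (μ, σ) ∈ {p : ℝ × ℝ | 0 ≤ p.1})]
      rw [max_eq_left hμ, max_eq_left hy,
        max_eq_left (by positivity : (0:ℝ) ≤ μ + σ * y)]
      have hky := hk_nonneg y
      rw [← ENNReal.ofReal_mul (by positivity), ← ENNReal.ofReal_mul (by positivity),
        ← ENNReal.ofReal_add (by positivity) (by positivity),
        ← ENNReal.ofReal_mul (by positivity), ← ENNReal.ofReal_mul (by positivity)]
      apply ENNReal.ofReal_le_ofReal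
      have key := key_real hm hμ (by positivity : (0:ℝ) ≤ σ * y)
      rw [Real.mul_rpow hσ.le hy] at key
      have := mul_le_mul_of_nonneg_right key (hk_nonneg y)
      calc min 1 (2 ^ (m - 1)) * (μ ^ m * k y + σ ^ m * (y ^ m * k y))
          = min 1 (2 ^ (m - 1)) * (μ ^ m + σ ^ m * y ^ m) * k y := by ring
        _ ≤ (μ + σ * y) ^ m * k y := this
    · rw [Set.indicator_of_notMem (by exact hμ : (μ, σ) ∉ {p : ℝ × ℝ | 0 ≤ p.1}),
        max_eq_right (le_of_not_ge hμ), Real.zero_rpow hm.ne', ENNReal.ofReal_zero]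
      simp
  · rw [Set.indicator_of_notMem (by exact hy : y ∉ Set.Ici (0:ℝ)),
      max_eq_right (le_of_not_ge hy), Real.zero_rpow hm.ne', zero_mul, ENNReal.ofReal_zero]
    simp


theorem stmt_7 (k : ℝ → ℝ) (hk_meas : Measurable k) (hk_nonneg : ∀ x, 0 ≤ k x)
    (hk_int : ∫⁻ x, ENNReal.ofReal (k x) = 1)
    (G : Measure (ℝ × ℝ)) [IsProbabilityMeasure G] (hσ : ∀ᵐ p ∂G, 0 < p.2)
    (m : ℝ) (hm : 0 < m)
    (f : ℝ → ℝ≥0∞)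
    (hf : ∀ x, f x = ∫⁻ p, ENNReal.ofReal ((1 / p.2) * k ((x - p.1) / p.2)) ∂G) :
    ENNReal.ofReal (min 1 (2 ^ (m - 1))) *
        ((∫⁻ p, ENNReal.ofReal ((max p.1 0) ^ m) ∂G) *
            (∫⁻ y in Set.Ici (0 : ℝ), ENNReal.ofReal (k y)) +
          (∫⁻ y, ENNReal.ofReal ((max y 0) ^ m * k y)) *
            (∫⁻ p in {p : ℝ × ℝ | 0 ≤ p.1}, ENNReal.ofReal (p.2 ^ m) ∂G)) ≤
      ∫⁻ x, ENNReal.ofReal ((max x 0) ^ m) * f x := by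
  have hsetm : MeasurableSet {p : ℝ × ℝ | 0 ≤ p.1} :=
    measurableSet_le measurable_const measurable_fst
  set c := ENNReal.ofReal (min 1 (2 ^ (m - 1))) with hc
  set Kbar := ∫⁻ y in Set.Ici (0 : ℝ), ENNReal.ofReal (k y) with hKbar
  set E := ∫⁻ y, ENNReal.ofReal ((max y 0) ^ m * k y) with hE
  have hFm : Measurable fun q : ℝ × (ℝ × ℝ) =>
      ENNReal.ofReal ((max q.1 0) ^ m) *
        ENNReal.ofReal ((1 / q.2.2) * k ((q.1 - q.2.1) / q.2.2)) := by
    apply Measurable.fun_mul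
    · exact ((measurable_fst.max measurable_const).pow_const m).ennreal_ofReal
    · exact ((measurable_const.div measurable_snd.snd).mul
        (hk_meas.comp ((measurable_fst.sub measurable_snd.fst).div measurable_snd.snd))).ennreal_ofReal
  have hrhs : (∫⁻ x, ENNReal.ofReal ((max x 0) ^ m) * f x) =
      ∫⁻ p, ∫⁻ x, ENNReal.ofReal ((max x 0) ^ m) *
        ENNReal.ofReal ((1 / p.2) * k ((x - p.1) / p.2)) ∂volume ∂G := by
    calc ∫⁻ x, ENNReal.ofReal ((max x 0) ^ m) * f x
        = ∫⁻ x, ∫⁻ p, ENNReal.ofReal ((max x 0) ^ m) *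
            ENNReal.ofReal ((1 / p.2) * k ((x - p.1) / p.2)) ∂G ∂volume := by
          refine lintegral_congr fun x => ?_
          rw [hf x, ← lintegral_const_mul' _ _ ENNReal.ofReal_ne_top]
      _ = _ := lintegral_lintegral_swap hFm.aemeasurable
  rw [hrhs]
  have hA : Measurable fun p : ℝ × ℝ => ENNReal.ofReal ((max p.1 0) ^ m) :=
    ((measurable_fst.max measurable_const).pow_const m).ennreal_ofReal
  have hInd : Measurable ({p : ℝ × ℝ | 0 ≤ p.1}.indicator
      fun p : ℝ × ℝ => ENNReal.ofReal (p.2 ^ m)) :=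
    ((measurable_snd.pow_const m).ennreal_ofReal).indicator hsetm
  have hL : ∀ᵐ p ∂G, c * (ENNReal.ofReal ((max p.1 0) ^ m) * Kbar +
        {p : ℝ × ℝ | 0 ≤ p.1}.indicator (fun p : ℝ × ℝ => ENNReal.ofReal (p.2 ^ m)) p * E)
      ≤ ∫⁻ x, ENNReal.ofReal ((max x 0) ^ m) *
          ENNReal.ofReal ((1 / p.2) * k ((x - p.1) / p.2)) := by
    filter_upwards [hσ] with p hp
    rw [inner_eq hk_meas hp]
    have e1 : Measurable fun y : ℝ =>
        (Set.Ici (0 : ℝ)).indicator (fun y => ENNReal.ofReal (k y)) y :=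
      (hk_meas.ennreal_ofReal).indicator measurableSet_Ici
    have e2 : Measurable fun y : ℝ => ENNReal.ofReal ((max y 0) ^ m * k y) :=
      (((measurable_id.max measurable_const).pow_const m).mul hk_meas).ennreal_ofReal
    have hcomp : c * (ENNReal.ofReal ((max p.1 0) ^ m) * Kbar +
          {p : ℝ × ℝ | 0 ≤ p.1}.indicator (fun p : ℝ × ℝ => ENNReal.ofReal (p.2 ^ m)) p * E)
        = ∫⁻ y, c * (ENNReal.ofReal ((max p.1 0) ^ m) *
            (Set.Ici (0 : ℝ)).indicator (fun y => ENNReal.ofReal (k y)) y +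
          {p : ℝ × ℝ | 0 ≤ p.1}.indicator (fun p : ℝ × ℝ => ENNReal.ofReal (p.2 ^ m)) p *
            ENNReal.ofReal ((max y 0) ^ m * k y)) := by
      rw [lintegral_const_mul c ((e1.const_mul _).fun_add (e2.const_mul _)),
        lintegral_add_left (e1.const_mul _), lintegral_const_mul _ e1,
        lintegral_const_mul _ e2, lintegral_indicator measurableSet_Ici]
    rw [hcomp]
    exact lintegral_mono fun y => pointwise_bound hk_nonneg hm hp y
  refine le_trans (le_of_eq ?_) (lintegral_mono_ae hL)
  rw [lintegral_const_mul c ((hA.mul_const _).fun_add (hInd.mul_const _)),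
    lintegral_add_left (hA.mul_const _), lintegral_mul_const _ hA,
    lintegral_mul_const _ hInd, lintegral_indicator hsetm, mul_comm E]
end

section
/- Let k be a probability density on ℝ with cdf K, G a probability measure on ℝ × ℝ⁺, and f(x) = ∫ (1/σ) k((x-μ)/σ) dG(μ,σ) with cdf F. Then for any m > 0, E_F[X_+^m] ≥ C_m^{-1} · E_K[X_+^m] · E_{G_σ}[σ^m] − E_{G_μ}[μ_-^m], where C_m = max(1, 2^{m-1}), G_μ and G_σ are the marginals of G, and μ_- = max(-μ, 0). -/
open MeasureTheory Filter Set
open scoped ENNReal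

/-- Change of variables `x = μ + σ y` for lower integrals. -/
lemma cov_affine (h : ℝ → ℝ≥0∞) (hmeas : Measurable h) {σ : ℝ} (hσ : 0 < σ) (μ : ℝ) :
    ∫⁻ x, h x = ENNReal.ofReal σ * ∫⁻ y, h (μ + σ * y) := by
  have h1 : ∫⁻ z, h (μ + z) ∂(Measure.map (fun y => σ * y) volume) = ∫⁻ y, h (μ + σ * y) :=
    lintegral_map (f := fun z => h (μ + z)) (hmeas.comp (measurable_const_add μ))
      (measurable_const_mul σ)
  have h2 : Measure.map (fun y => σ * y) volume = ENNReal.ofReal |σ⁻¹| • volume :=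
    Real.map_volume_mul_left (ne_of_gt hσ)
  rw [← h1, h2, lintegral_smul_measure]
  have h3 : ∫⁻ z, h (μ + z) = ∫⁻ x, h x := lintegral_add_left_eq_self h μ
  rw [h3, smul_eq_mul, ← mul_assoc, abs_of_pos (inv_pos.2 hσ),
    ← ENNReal.ofReal_mul hσ.le, mul_inv_cancel₀ (ne_of_gt hσ), ENNReal.ofReal_one, one_mul]

/-- Key elementary inequality `(a+b)^m ≤ max 1 (2^(m-1)) * (a^m + b^m)`. -/
lemma key_rpow_ineq {m : ℝ} (hm : 0 < m) {a b : ℝ} (ha : 0 ≤ a) (hb : 0 ≤ b) :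
    (a + b) ^ m ≤ max 1 (2 ^ (m - 1)) * (a ^ m + b ^ m) := by
  have ham : (0:ℝ) ≤ a ^ m := Real.rpow_nonneg ha m
  have hbm : (0:ℝ) ≤ b ^ m := Real.rpow_nonneg hb m
  rcases le_total m 1 with h1 | h1
  · have h := NNReal.coe_le_coe.2 (NNReal.rpow_add_le_add_rpow a.toNNReal b.toNNReal hm.le h1)
    push_cast [Real.coe_toNNReal', max_eq_left ha, max_eq_left hb] at h
    calc (a + b) ^ m ≤ a ^ m + b ^ m := h
      _ = 1 * (a ^ m + b ^ m) := by ring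
      _ ≤ max 1 (2 ^ (m - 1)) * (a ^ m + b ^ m) := by
          apply mul_le_mul_of_nonneg_right (le_max_left _ _); positivity
  · have h := NNReal.coe_le_coe.2
      (NNReal.rpow_add_le_mul_rpow_add_rpow a.toNNReal b.toNNReal h1)
    push_cast [Real.coe_toNNReal', max_eq_left ha, max_eq_left hb] at h
    calc (a + b) ^ m ≤ 2 ^ (m - 1) * (a ^ m + b ^ m) := h
      _ ≤ max 1 (2 ^ (m - 1)) * (a ^ m + b ^ m) := by
          apply mul_le_mul_of_nonneg_right (le_max_right _ _); positivity

set_option maxHeartbeats 1000000 in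
theorem stmt_8 (k : ℝ → ℝ) (hk_meas : Measurable k) (hk_nonneg : ∀ x, 0 ≤ k x)
    (hk_int : ∫⁻ x, ENNReal.ofReal (k x) = 1)
    (G : Measure (ℝ × ℝ)) [IsProbabilityMeasure G] (hσ : ∀ᵐ p ∂G, 0 < p.2)
    (m : ℝ) (hm : 0 < m)
    (f : ℝ → ℝ≥0∞)
    (hf : ∀ x, f x = ∫⁻ p, ENNReal.ofReal ((1 / p.2) * k ((x - p.1) / p.2)) ∂G) :
    (ENNReal.ofReal (max 1 (2 ^ (m - 1))))⁻¹ *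
        (∫⁻ y, ENNReal.ofReal ((max y 0) ^ m * k y)) *
        (∫⁻ p, ENNReal.ofReal (p.2 ^ m) ∂G) -
      (∫⁻ p, ENNReal.ofReal ((max (-p.1) 0) ^ m) ∂G) ≤
      ∫⁻ x, ENNReal.ofReal ((max x 0) ^ m) * f x := by
  set C : ℝ≥0∞ := ENNReal.ofReal (max 1 (2 ^ (m - 1))) with hCdef
  set A : ℝ≥0∞ := ∫⁻ y, ENNReal.ofReal ((max y 0) ^ m * k y) with hAdef
  set B : ℝ≥0∞ := ∫⁻ p, ENNReal.ofReal (p.2 ^ m) ∂G with hBdef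
  set M : ℝ≥0∞ := ∫⁻ p, ENNReal.ofReal ((max (-p.1) 0) ^ m) ∂G with hMdef
  set R : ℝ≥0∞ := ∫⁻ x, ENNReal.ofReal ((max x 0) ^ m) * f x with hRdef
  have hcmax : (1:ℝ) ≤ max 1 (2 ^ (m - 1)) := le_max_left _ _
  have hC0 : C ≠ 0 := by
    simp only [hCdef, ne_eq, ENNReal.ofReal_eq_zero, not_le]
    linarith
  have hCtop : C ≠ ⊤ := ENNReal.ofReal_ne_top
  -- W p y : the transformed integrand of R
  set W : ℝ × ℝ → ℝ → ℝ≥0∞ :=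
    fun p y => ENNReal.ofReal ((max (p.1 + p.2 * y) 0) ^ m * k y) with hWdef
  have hWmeas : Measurable (Function.uncurry W) := by
    apply Measurable.ennreal_ofReal
    apply Measurable.mul
    · apply Measurable.pow_const
      exact ((measurable_fst.fst).add (measurable_fst.snd.mul measurable_snd)).max
        measurable_const
    · exact hk_meas.comp measurable_snd
  have hWp : ∀ p, Measurable (W p) := fun p =>
    hWmeas.comp measurable_prodMk_left
  -- Step 1 : R in transformed form
  have hR : R = ∫⁻ p, ∫⁻ y, W p y ∂volume ∂G := by
    have e1 : R = ∫⁻ x, ∫⁻ p,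
        ENNReal.ofReal ((max x 0) ^ m) *
          ENNReal.ofReal ((1 / p.2) * k ((x - p.1) / p.2)) ∂G := by
      rw [hRdef]
      refine lintegral_congr fun x => ?_
      rw [hf x, ← lintegral_const_mul]
      apply Measurable.ennreal_ofReal
      exact (measurable_const.div measurable_snd).mul
        (hk_meas.comp ((measurable_const.sub measurable_fst).div measurable_snd))
    have hswapmeas : AEMeasurable
        (Function.uncurry (fun (x : ℝ) (p : ℝ × ℝ) =>
          ENNReal.ofReal ((max x 0) ^ m) *
            ENNReal.ofReal ((1 / p.2) * k ((x - p.1) / p.2)))) (volume.prod G) := by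
      apply Measurable.aemeasurable
      apply Measurable.fun_mul
      · exact ((measurable_fst.max measurable_const).pow_const m).ennreal_ofReal
      · apply Measurable.ennreal_ofReal
        exact (measurable_const.div measurable_snd.snd).mul
          (hk_meas.comp ((measurable_fst.sub measurable_snd.fst).div measurable_snd.snd))
    have hswap := lintegral_lintegral_swap (μ := (volume : Measure ℝ)) (ν := G)
      (f := fun (x : ℝ) (p : ℝ × ℝ) =>
        ENNReal.ofReal ((max x 0) ^ m) *
          ENNReal.ofReal ((1 / p.2) * k ((x - p.1) / p.2))) hswapmeas
    rw [e1, hswap]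
    refine lintegral_congr_ae (hσ.mono fun p hp => ?_)
    -- change of variables in the inner integral
    have hp2 : (0:ℝ) < p.2 := hp
    have hinner : ∀ x : ℝ,
        ENNReal.ofReal ((max x 0) ^ m) * ENNReal.ofReal ((1 / p.2) * k ((x - p.1) / p.2))
          = ENNReal.ofReal (1 / p.2) *
              ENNReal.ofReal ((max x 0) ^ m * k ((x - p.1) / p.2)) := by
      intro x
      rw [ENNReal.ofReal_mul (by positivity),
        ENNReal.ofReal_mul (Real.rpow_nonneg (le_max_right _ _) m)]
      ring
    simp only [hinner]
    rw [lintegral_const_mul]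
    swap
    · exact (((measurable_id.max measurable_const).pow_const m).mul
        (hk_meas.comp ((measurable_id.sub measurable_const).div_const _))).ennreal_ofReal
    have hcov := cov_affine
      (fun x => ENNReal.ofReal ((max x 0) ^ m * k ((x - p.1) / p.2)))
      ((((measurable_id.max measurable_const).pow_const m).mul
        (hk_meas.comp ((measurable_id.sub measurable_const).div_const _))).ennreal_ofReal)
      hp2 p.1
    rw [hcov, ← mul_assoc, ← ENNReal.ofReal_mul (by positivity),
      one_div, inv_mul_cancel₀ (ne_of_gt hp2), ENNReal.ofReal_one, one_mul]
    refine lintegral_congr fun y => ?_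
    have : (p.1 + p.2 * y - p.1) / p.2 = y := by field_simp; ring
    rw [this]
  -- Step 2 : A * B in double-integral form
  have hAB : A * B = ∫⁻ p, ∫⁻ y,
      ENNReal.ofReal (p.2 ^ m * ((max y 0) ^ m * k y)) ∂volume ∂G := by
    have e1 : A * B = ∫⁻ p, ENNReal.ofReal (p.2 ^ m) * A ∂G := by
      rw [lintegral_mul_const A ((measurable_snd.pow_const m).ennreal_ofReal), mul_comm]
    rw [e1]
    refine lintegral_congr fun p => ?_
    rw [hAdef, ← lintegral_const_mul]
    swap
    · exact (((measurable_id.max measurable_const).pow_const m).mul hk_meas).ennreal_ofReal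
    refine lintegral_congr fun y => ?_
    exact (ENNReal.ofReal_mul'
      (mul_nonneg (Real.rpow_nonneg (le_max_right _ _) m) (hk_nonneg y))).symm
  -- Step 3 : M in double-integral form (inner integral wrt k)
  have hMin : ∀ p : ℝ × ℝ, ENNReal.ofReal ((max (-p.1) 0) ^ m)
      = ∫⁻ y, ENNReal.ofReal ((max (-p.1) 0) ^ m * k y) := by
    intro p
    have : ∀ y : ℝ, ENNReal.ofReal ((max (-p.1) 0) ^ m * k y)
        = ENNReal.ofReal ((max (-p.1) 0) ^ m) * ENNReal.ofReal (k y) := fun y =>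
      ENNReal.ofReal_mul (Real.rpow_nonneg (le_max_right _ _) m)
    simp only [this]
    rw [lintegral_const_mul _ hk_meas.ennreal_ofReal, hk_int, mul_one]
  -- Step 4 : pointwise inequality
  have hpt : ∀ p : ℝ × ℝ, 0 < p.2 → ∀ y : ℝ,
      ENNReal.ofReal (p.2 ^ m * ((max y 0) ^ m * k y))
        ≤ C * (W p y + ENNReal.ofReal ((max (-p.1) 0) ^ m * k y)) := by
    intro p hp2 y
    have hreal : p.2 ^ m * ((max y 0) ^ m * k y)
        ≤ max 1 (2 ^ (m - 1)) *
          ((max (p.1 + p.2 * y) 0) ^ m * k y + (max (-p.1) 0) ^ m * k y) := by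
      have h1 : p.2 ^ m * (max y 0) ^ m = (max (p.2 * y) 0) ^ m := by
        rw [← Real.mul_rpow hp2.le (le_max_right _ _)]
        congr 1
        rw [mul_max_of_nonneg _ _ hp2.le, mul_zero]
      have h2 : max (p.2 * y) 0 ≤ max (p.1 + p.2 * y) 0 + max (-p.1) 0 := by
        apply max_le
        · calc p.2 * y = (p.1 + p.2 * y) + (-p.1) := by ring
            _ ≤ max (p.1 + p.2 * y) 0 + max (-p.1) 0 :=
              add_le_add (le_max_left _ _) (le_max_left _ _)
        · positivity
      have h3 : (max (p.2 * y) 0) ^ m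
          ≤ (max (p.1 + p.2 * y) 0 + max (-p.1) 0) ^ m :=
        Real.rpow_le_rpow (le_max_right _ _) h2 hm.le
      have h4 := key_rpow_ineq hm (le_max_right (p.1 + p.2 * y) 0)
        (le_max_right (-p.1) 0)
      calc p.2 ^ m * ((max y 0) ^ m * k y)
          = (p.2 ^ m * (max y 0) ^ m) * k y := by ring
        _ ≤ (max 1 (2 ^ (m - 1)) *
              ((max (p.1 + p.2 * y) 0) ^ m + (max (-p.1) 0) ^ m)) * k y := by
            apply mul_le_mul_of_nonneg_right _ (hk_nonneg y)
            rw [h1]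
            exact h3.trans h4
        _ = max 1 (2 ^ (m - 1)) *
              ((max (p.1 + p.2 * y) 0) ^ m * k y + (max (-p.1) 0) ^ m * k y) := by ring
    calc ENNReal.ofReal (p.2 ^ m * ((max y 0) ^ m * k y))
        ≤ ENNReal.ofReal (max 1 (2 ^ (m - 1)) *
            ((max (p.1 + p.2 * y) 0) ^ m * k y + (max (-p.1) 0) ^ m * k y)) :=
          ENNReal.ofReal_le_ofReal hreal
      _ = C * (W p y + ENNReal.ofReal ((max (-p.1) 0) ^ m * k y)) := by
          rw [ENNReal.ofReal_mul (by linarith), ENNReal.ofReal_add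
            (mul_nonneg (Real.rpow_nonneg (le_max_right _ _) m) (hk_nonneg y))
            (mul_nonneg (Real.rpow_nonneg (le_max_right _ _) m) (hk_nonneg y))]
  -- Step 5 : combine
  have hmain : A * B ≤ C * (R + M) := by
    rw [hAB, hR]
    calc (∫⁻ p, ∫⁻ y, ENNReal.ofReal (p.2 ^ m * ((max y 0) ^ m * k y)) ∂volume ∂G)
        ≤ ∫⁻ p, C * ((∫⁻ y, W p y ∂volume) +
            ENNReal.ofReal ((max (-p.1) 0) ^ m)) ∂G := by
          refine lintegral_mono_ae (hσ.mono fun p hp => ?_)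
          calc (∫⁻ y, ENNReal.ofReal (p.2 ^ m * ((max y 0) ^ m * k y)) ∂volume)
              ≤ ∫⁻ y, C * (W p y +
                  ENNReal.ofReal ((max (-p.1) 0) ^ m * k y)) ∂volume :=
                lintegral_mono (hpt p hp)
            _ = C * ((∫⁻ y, W p y ∂volume) + ENNReal.ofReal ((max (-p.1) 0) ^ m)) := by
                rw [lintegral_const_mul' _ _ hCtop, lintegral_add_left (hWp p), hMin p]
      _ = C * ((∫⁻ p, ∫⁻ y, W p y ∂volume ∂G) + M) := by
          rw [lintegral_const_mul' _ _ hCtop, lintegral_add_left]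
          exact hWmeas.lintegral_prod_right
  -- conclusion
  rw [tsub_le_iff_right]
  calc C⁻¹ * A * B = C⁻¹ * (A * B) := by rw [mul_assoc]
    _ ≤ C⁻¹ * (C * (R + M)) := mul_le_mul_right hmain _
    _ = R + M := by rw [← mul_assoc, ENNReal.inv_mul_cancel hC0 hCtop, one_mul]
end

section
/- Let k be a probability density on ℝ with cdf K, G a probability measure on ℝ × ℝ⁺, and f(x) = ∫ (1/σ) k((x-μ)/σ) dG(μ,σ) with cdf F. Then for any m > 0, E_F[X_+^m] ≤ C_m · (E_{G_μ}[μ_+^m] + E_K[X_+^m] · E_{G_σ}[σ^m]), where C_m = max(1, 2^{m-1}). -/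
open MeasureTheory Filter Set
open scoped ENNReal

private lemma aux_cv (g : ℝ → ℝ≥0∞) (hg : Measurable g) (a s : ℝ) (hs : 0 < s) :
    ∫⁻ x, g x = ENNReal.ofReal s * ∫⁻ y, g (a + s * y) := by
  have hmap : Measure.map (fun y : ℝ => a + s * y) volume
      = ENNReal.ofReal |s⁻¹| • volume := by
    rw [show (fun y : ℝ => a + s * y) = (fun x => a + x) ∘ (fun y => s * y) from rfl,
      ← Measure.map_map (measurable_const_add a) (measurable_const_mul s),
      Real.map_volume_mul_left hs.ne', Measure.map_smul,
      map_add_left_eq_self volume a]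
  have h1 : ∫⁻ y, g (a + s * y) = ENNReal.ofReal |s⁻¹| * ∫⁻ x, g x := by
    rw [← lintegral_map hg (by fun_prop), hmap, lintegral_smul_measure, smul_eq_mul]
  rw [h1, ← mul_assoc, abs_of_pos (inv_pos.mpr hs), ← ENNReal.ofReal_mul hs.le,
    mul_inv_cancel₀ hs.ne', ENNReal.ofReal_one, one_mul]

private lemma aux_or (m : ℝ) (hm : 0 < m) (x : ℝ) :
    ENNReal.ofReal ((max x 0) ^ m) = (ENNReal.ofReal x) ^ m := by
  rcases le_or_gt x 0 with hx | hx
  · rw [max_eq_right hx, Real.zero_rpow hm.ne', ENNReal.ofReal_zero,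
      ENNReal.ofReal_eq_zero.mpr hx, ENNReal.zero_rpow_of_pos hm]
  · rw [max_eq_left hx.le, ← ENNReal.ofReal_rpow_of_pos hx]

theorem stmt_9 (k : ℝ → ℝ) (hk_meas : Measurable k) (hk_nonneg : ∀ x, 0 ≤ k x)
    (hk_int : ∫⁻ x, ENNReal.ofReal (k x) = 1)
    (G : Measure (ℝ × ℝ)) [IsProbabilityMeasure G] (hσ : ∀ᵐ p ∂G, 0 < p.2)
    (m : ℝ) (hm : 0 < m)
    (f : ℝ → ℝ≥0∞)
    (hf : ∀ x, f x = ∫⁻ p, ENNReal.ofReal ((1 / p.2) * k ((x - p.1) / p.2)) ∂G) :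
    ∫⁻ x, ENNReal.ofReal ((max x 0) ^ m) * f x ≤
      ENNReal.ofReal (max 1 (2 ^ (m - 1))) *
        ((∫⁻ p, ENNReal.ofReal ((max p.1 0) ^ m) ∂G) +
          (∫⁻ y, ENNReal.ofReal ((max y 0) ^ m * k y)) *
            (∫⁻ p, ENNReal.ofReal (p.2 ^ m) ∂G)) := by
  have hrm : Measurable fun x : ℝ≥0∞ => x ^ m :=
    ENNReal.continuous_rpow_const.measurable
  set C : ℝ≥0∞ := ENNReal.ofReal (max 1 (2 ^ (m - 1))) with hC
  have hC1 : (1 : ℝ≥0∞) ≤ C := by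
    rw [hC, ENNReal.one_le_ofReal]; exact le_max_left _ _
  have hC2 : (2 : ℝ≥0∞) ^ (m - 1) ≤ C := by
    rw [hC]
    calc (2 : ℝ≥0∞) ^ (m - 1) = ENNReal.ofReal 2 ^ (m - 1) := by
          rw [ENNReal.ofReal_ofNat]
      _ = ENNReal.ofReal (2 ^ (m - 1)) := ENNReal.ofReal_rpow_of_pos two_pos
      _ ≤ _ := ENNReal.ofReal_le_ofReal (le_max_right _ _)
  have key : ∀ A B : ℝ≥0∞, (A + B) ^ m ≤ C * (A ^ m + B ^ m) := by
    intro A B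
    rcases le_total m 1 with h1 | h1
    · calc (A + B) ^ m ≤ A ^ m + B ^ m := ENNReal.rpow_add_le_add_rpow A B hm.le h1
        _ ≤ C * (A ^ m + B ^ m) := le_mul_of_one_le_left zero_le hC1
    · calc (A + B) ^ m ≤ (2 : ℝ≥0∞) ^ (m - 1) * (A ^ m + B ^ m) :=
            ENNReal.rpow_add_le_mul_rpow_add_rpow A B h1
        _ ≤ C * (A ^ m + B ^ m) := mul_le_mul_left hC2 _
  have hker : Measurable (fun z : ℝ × (ℝ × ℝ) =>
      ENNReal.ofReal ((1 / z.2.2) * k ((z.1 - z.2.1) / z.2.2))) := by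
    apply Measurable.ennreal_ofReal
    exact (measurable_const.div (measurable_snd.comp measurable_snd)).mul
      (hk_meas.comp ((measurable_fst.sub (measurable_fst.comp measurable_snd)).div
        (measurable_snd.comp measurable_snd)))
  set I : ℝ≥0∞ := ∫⁻ y, ENNReal.ofReal ((max y 0) ^ m * k y) with hI
  have hIeq : I = ∫⁻ y, (ENNReal.ofReal y) ^ m * ENNReal.ofReal (k y) := by
    rw [hI]
    congr 1; ext y
    rw [ENNReal.ofReal_mul (Real.rpow_nonneg (le_max_right _ _) m), aux_or m hm]
  -- Step 1: swap integrals
  have hswap : ∫⁻ x, ENNReal.ofReal ((max x 0) ^ m) * f x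
      = ∫⁻ p, ∫⁻ x, (ENNReal.ofReal x) ^ m *
          ENNReal.ofReal ((1 / p.2) * k ((x - p.1) / p.2)) ∂volume ∂G := by
    have h0 : ∀ x, ENNReal.ofReal ((max x 0) ^ m) * f x
        = ∫⁻ p, (ENNReal.ofReal x) ^ m *
            ENNReal.ofReal ((1 / p.2) * k ((x - p.1) / p.2)) ∂G := by
      intro x
      rw [hf x, aux_or m hm, ← lintegral_const_mul _ (by fun_prop)]
    simp_rw [h0]
    exact lintegral_lintegral_swap
      (((hrm.comp (measurable_fst.ennreal_ofReal)).mul hker).aemeasurable)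
  rw [hswap]
  -- Step 2: a.e. bound on the inner integral
  have hbound : ∀ᵐ p ∂G, (∫⁻ x, (ENNReal.ofReal x) ^ m *
        ENNReal.ofReal ((1 / p.2) * k ((x - p.1) / p.2)) ∂volume)
      ≤ C * ((ENNReal.ofReal p.1) ^ m + (ENNReal.ofReal p.2) ^ m * I) := by
    filter_upwards [hσ] with p hp
    obtain ⟨a, s⟩ := p
    simp only at hp ⊢
    have hg : Measurable (fun x : ℝ => (ENNReal.ofReal x) ^ m *
        ENNReal.ofReal ((1 / s) * k ((x - a) / s))) := by
      exact (hrm.comp ENNReal.measurable_ofReal).mul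
        (((hk_meas.comp ((measurable_id.sub measurable_const).div
          measurable_const)).const_mul _).ennreal_ofReal)
    have step2 : (∫⁻ x, (ENNReal.ofReal x) ^ m *
          ENNReal.ofReal ((1 / s) * k ((x - a) / s)) ∂volume)
        = ∫⁻ y, (ENNReal.ofReal (a + s * y)) ^ m * ENNReal.ofReal (k y) := by
      rw [aux_cv _ hg a s hp, ← lintegral_const_mul _ (by
        exact hg.comp (measurable_const.add (measurable_id.const_mul s)))]
      congr 1; ext y
      have h1 : (a + s * y - a) / s = y := by field_simp; ring
      rw [h1, ← mul_assoc, mul_comm (ENNReal.ofReal s), mul_assoc,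
        ← ENNReal.ofReal_mul (by positivity)]
      congr 2
      field_simp
    have hpt : ∀ y : ℝ, (ENNReal.ofReal (a + s * y)) ^ m
        ≤ C * ((ENNReal.ofReal a) ^ m +
            (ENNReal.ofReal s) ^ m * (ENNReal.ofReal y) ^ m) := by
      intro y
      calc (ENNReal.ofReal (a + s * y)) ^ m
          ≤ (ENNReal.ofReal a + ENNReal.ofReal (s * y)) ^ m :=
            ENNReal.rpow_le_rpow ENNReal.ofReal_add_le hm.le
        _ = (ENNReal.ofReal a + ENNReal.ofReal s * ENNReal.ofReal y) ^ m := by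
            rw [ENNReal.ofReal_mul hp.le]
        _ ≤ C * ((ENNReal.ofReal a) ^ m + (ENNReal.ofReal s * ENNReal.ofReal y) ^ m) :=
            key _ _
        _ = C * ((ENNReal.ofReal a) ^ m +
              (ENNReal.ofReal s) ^ m * (ENNReal.ofReal y) ^ m) := by
            rw [ENNReal.mul_rpow_of_nonneg _ _ hm.le]
    calc (∫⁻ x, (ENNReal.ofReal x) ^ m *
          ENNReal.ofReal ((1 / s) * k ((x - a) / s)) ∂volume)
        = ∫⁻ y, (ENNReal.ofReal (a + s * y)) ^ m * ENNReal.ofReal (k y) := step2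
      _ ≤ ∫⁻ y, (C * ((ENNReal.ofReal a) ^ m +
            (ENNReal.ofReal s) ^ m * (ENNReal.ofReal y) ^ m)) * ENNReal.ofReal (k y) :=
          lintegral_mono fun y => mul_le_mul_left (hpt y) _
      _ = C * ((ENNReal.ofReal a) ^ m * ∫⁻ y, ENNReal.ofReal (k y)) +
          C * ((ENNReal.ofReal s) ^ m * ∫⁻ y, (ENNReal.ofReal y) ^ m * ENNReal.ofReal (k y)) := by
          simp_rw [mul_add, add_mul, mul_assoc]
          rw [lintegral_add_left (by fun_prop)]
          rw [lintegral_const_mul _ (by fun_prop), lintegral_const_mul _ (by fun_prop),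
            lintegral_const_mul _ (by fun_prop), lintegral_const_mul _ (by fun_prop)]
      _ = C * ((ENNReal.ofReal a) ^ m + (ENNReal.ofReal s) ^ m * I) := by
          rw [hk_int, hIeq, mul_one, mul_add]
  -- Step 3: integrate over G and conclude
  calc (∫⁻ p, ∫⁻ x, (ENNReal.ofReal x) ^ m *
        ENNReal.ofReal ((1 / p.2) * k ((x - p.1) / p.2)) ∂volume ∂G)
      ≤ ∫⁻ p, C * ((ENNReal.ofReal p.1) ^ m + (ENNReal.ofReal p.2) ^ m * I) ∂G :=
        lintegral_mono_ae hbound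
    _ = C * ((∫⁻ p, (ENNReal.ofReal p.1) ^ m ∂G) +
          (∫⁻ p, (ENNReal.ofReal p.2) ^ m ∂G) * I) := by
        rw [lintegral_const_mul _ (by
            exact ((hrm.comp measurable_fst.ennreal_ofReal).add
              ((hrm.comp measurable_snd.ennreal_ofReal).mul_const I))),
          lintegral_add_left (by exact hrm.comp measurable_fst.ennreal_ofReal),
          lintegral_mul_const _ (by exact hrm.comp measurable_snd.ennreal_ofReal)]
    _ = C * ((∫⁻ p, ENNReal.ofReal ((max p.1 0) ^ m) ∂G) +
          I * (∫⁻ p, ENNReal.ofReal (p.2 ^ m) ∂G)) := by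
        congr 1
        have e1 : (∫⁻ p, (ENNReal.ofReal p.1) ^ m ∂G)
            = ∫⁻ p, ENNReal.ofReal ((max p.1 0) ^ m) ∂G := by
          simp_rw [aux_or m hm]
        have e2 : (∫⁻ p, (ENNReal.ofReal p.2) ^ m ∂G)
            = ∫⁻ p, ENNReal.ofReal (p.2 ^ m) ∂G := by
          refine lintegral_congr_ae ?_
          filter_upwards [hσ] with p hp
          rw [ENNReal.ofReal_rpow_of_pos hp]
        rw [e1, e2, mul_comm]
end

section
/- Let k be a probability density with full support on ℝ and cdf K, and let G be a probability measure on ℝ × ℝ⁺ whose marginals G_μ and G_σ have all positive moments finite (E_{G_μ}[|μ|^m] < ∞ and E_{G_σ}[σ^m] < ∞ for all m > 0). Let F be the cdf of the mixture f(x) = ∫ (1/σ)k((x-μ)/σ) dG(μ,σ). Then the right tail index of F equals the right tail index of K: α_+(F) = α_+(K). -/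
open MeasureTheory Filter Set
open scoped ENNReal


lemma aux_subst (k : ℝ → ℝ) (hk_meas : Measurable k) (μ σ : ℝ) (hσ : 0 < σ) (x : ℝ) :
    ∫⁻ t in Set.Iic x, ENNReal.ofReal ((1 / σ) * k ((t - μ) / σ)) =
      ∫⁻ u in Set.Iic ((x - μ) / σ), ENNReal.ofReal (k u) := by
  have hT : Measurable fun u : ℝ => σ * u + μ := by fun_prop
  have h2 : Measure.map (fun u : ℝ => σ * u) volume = ENNReal.ofReal σ⁻¹ • volume := by
    have := Real.map_volume_mul_left hσ.ne'
    rw [abs_of_pos (inv_pos.mpr hσ)] at this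
    exact this
  have hmap : Measure.map (fun u : ℝ => σ * u + μ) volume = ENNReal.ofReal σ⁻¹ • volume := by
    have h1 : (fun u : ℝ => σ * u + μ) = (fun t : ℝ => t + μ) ∘ (fun u : ℝ => σ * u) := rfl
    rw [h1, ← Measure.map_map (by fun_prop : Measurable fun t : ℝ => t + μ)
        (by fun_prop : Measurable fun u : ℝ => σ * u),
      h2, Measure.map_smul, map_add_right_eq_self volume μ]
  have hvol : (volume : Measure ℝ) = ENNReal.ofReal σ • Measure.map (fun u : ℝ => σ * u + μ) volume := by
    rw [hmap, smul_smul, ← ENNReal.ofReal_mul hσ.le, mul_inv_cancel₀ hσ.ne', ENNReal.ofReal_one,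
      one_smul]
  have hf : Measurable fun t : ℝ => ENNReal.ofReal ((1 / σ) * k ((t - μ) / σ)) := by fun_prop
  have hpre : (fun u : ℝ => σ * u + μ) ⁻¹' (Set.Iic x) = Set.Iic ((x - μ) / σ) := by
    ext u
    simp only [Set.mem_preimage, Set.mem_Iic, le_div_iff₀ hσ]
    constructor <;> intro h <;> nlinarith
  conv_lhs => rw [hvol]
  rw [Measure.restrict_smul, lintegral_smul_measure,
    setLIntegral_map measurableSet_Iic hf hT, hpre]
  simp only [show ∀ u : ℝ, (σ * u + μ - μ) / σ = u from fun u => by field_simp; ring]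
  rw [smul_eq_mul, ← lintegral_const_mul _ (by fun_prop : Measurable fun u : ℝ => ENNReal.ofReal (1 / σ * k u))]
  congr 1
  ext u
  rw [← ENNReal.ofReal_mul hσ.le]
  congr 1
  field_simp

variable {k K : ℝ → ℝ}

lemma aux_Iic_le_one (hk_int : ∫⁻ x, ENNReal.ofReal (k x) = 1) (x : ℝ) :
    ∫⁻ t in Set.Iic x, ENNReal.ofReal (k t) ≤ 1 := by
  rw [← hk_int]; exact setLIntegral_le_lintegral _ _

lemma aux_K_nonneg (hK : ∀ x, K x = (∫⁻ t in Set.Iic x, ENNReal.ofReal (k t)).toReal) (x : ℝ) :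
    0 ≤ K x := by rw [hK]; exact ENNReal.toReal_nonneg

lemma aux_K_le_one (hk_int : ∫⁻ x, ENNReal.ofReal (k x) = 1)
    (hK : ∀ x, K x = (∫⁻ t in Set.Iic x, ENNReal.ofReal (k t)).toReal) (x : ℝ) :
    K x ≤ 1 := by
  rw [hK]
  have := aux_Iic_le_one hk_int x
  calc (∫⁻ t in Set.Iic x, ENNReal.ofReal (k t)).toReal ≤ (1 : ℝ≥0∞).toReal :=
        ENNReal.toReal_mono (by simp) this
    _ = 1 := by simp

lemma aux_K_mono (hk_int : ∫⁻ x, ENNReal.ofReal (k x) = 1)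
    (hK : ∀ x, K x = (∫⁻ t in Set.Iic x, ENNReal.ofReal (k t)).toReal) :
    Monotone K := by
  intro x y hxy
  rw [hK, hK]
  refine ENNReal.toReal_mono (ne_top_of_le_ne_top (by simp) (aux_Iic_le_one hk_int y)) ?_
  exact lintegral_mono_set (Set.Iic_subset_Iic.mpr hxy)

lemma aux_K_lt_one (hk_meas : Measurable k) (hk_pos : ∀ x, 0 < k x)
    (hk_int : ∫⁻ x, ENNReal.ofReal (k x) = 1)
    (hK : ∀ x, K x = (∫⁻ t in Set.Iic x, ENNReal.ofReal (k t)).toReal) (x : ℝ) :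
    K x < 1 := by
  rw [hK]
  have hsplit : (∫⁻ t in Set.Iic x, ENNReal.ofReal (k t)) +
      (∫⁻ t in Set.Ioi x, ENNReal.ofReal (k t)) = 1 := by
    rw [← hk_int]
    have : Set.Ioi x = (Set.Iic x)ᶜ := by simp
    rw [this]
    exact lintegral_add_compl _ measurableSet_Iic
  have hpos : 0 < ∫⁻ t in Set.Ioi x, ENNReal.ofReal (k t) := by
    rw [lintegral_pos_iff_support (by fun_prop : Measurable fun t : ℝ => ENNReal.ofReal (k t))]
    have hsupp : Function.support (fun t => ENNReal.ofReal (k t)) = Set.univ := by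
      ext t; simp [Function.mem_support, ENNReal.ofReal_eq_zero, not_le, hk_pos t]
    rw [hsupp]
    simp
  have hlt : (∫⁻ t in Set.Iic x, ENNReal.ofReal (k t)) < 1 := by
    by_contra h
    push_neg at h
    have heq : (∫⁻ t in Set.Iic x, ENNReal.ofReal (k t)) = 1 :=
      le_antisymm (aux_Iic_le_one hk_int x) h
    rw [heq] at hsplit
    have : (∫⁻ t in Set.Ioi x, ENNReal.ofReal (k t)) = 0 := by
      have h1 : (1 : ℝ≥0∞) + (∫⁻ t in Set.Ioi x, ENNReal.ofReal (k t)) = 1 + 0 := by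
        simpa using hsplit
      exact (ENNReal.add_right_inj ENNReal.one_ne_top).mp h1
    simp [this] at hpos
  calc (∫⁻ t in Set.Iic x, ENNReal.ofReal (k t)).toReal < (1 : ℝ≥0∞).toReal := by
        apply (ENNReal.toReal_lt_toReal (ne_top_of_le_ne_top (by simp) (aux_Iic_le_one hk_int x)) (by simp)).mpr hlt
    _ = 1 := by simp

lemma aux_F_rep (k : ℝ → ℝ) (hk_meas : Measurable k)
    (hk_int : ∫⁻ x, ENNReal.ofReal (k x) = 1)
    (G : Measure (ℝ × ℝ)) [IsProbabilityMeasure G] (hσ : ∀ᵐ p ∂G, 0 < p.2)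
    (K F : ℝ → ℝ)
    (hK : ∀ x, K x = (∫⁻ t in Set.Iic x, ENNReal.ofReal (k t)).toReal)
    (hF : ∀ x, F x = (∫⁻ t in Set.Iic x,
        ∫⁻ p, ENNReal.ofReal ((1 / p.2) * k ((t - p.1) / p.2)) ∂G).toReal) (x : ℝ) :
    F x = (∫⁻ p, ENNReal.ofReal (K ((x - p.1) / p.2)) ∂G).toReal := by
  rw [hF x]
  congr 1
  have hswap : ∫⁻ t in Set.Iic x, ∫⁻ p, ENNReal.ofReal ((1 / p.2) * k ((t - p.1) / p.2)) ∂G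
      = ∫⁻ p, (∫⁻ t in Set.Iic x, ENNReal.ofReal ((1 / p.2) * k ((t - p.1) / p.2))) ∂G := by
    apply lintegral_lintegral_swap
    apply Measurable.aemeasurable
    fun_prop
  rw [hswap]
  apply lintegral_congr_ae
  filter_upwards [hσ] with p hp
  rw [aux_subst k hk_meas p.1 p.2 hp x, hK ((x - p.1) / p.2)]
  rw [ENNReal.ofReal_toReal]
  intro hcon
  have hle : ∫⁻ u in Set.Iic ((x - p.1) / p.2), ENNReal.ofReal (k u) ≤ 1 := by
    rw [← hk_int]; exact setLIntegral_le_lintegral _ _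
  rw [hcon] at hle
  simp at hle

lemma aux_add_one (G : Measure (ℝ × ℝ)) [IsProbabilityMeasure G]
    (K : ℝ → ℝ) (hKm : Measurable K) (hK0 : ∀ y, 0 ≤ K y) (hK1 : ∀ y, K y ≤ 1) (x : ℝ) :
    (∫⁻ p, ENNReal.ofReal (K ((x - p.1) / p.2)) ∂G) +
      (∫⁻ p, ENNReal.ofReal (1 - K ((x - p.1) / p.2)) ∂G) = 1 := by
  rw [← lintegral_add_left (by fun_prop)]
  have : ∀ p : ℝ × ℝ, ENNReal.ofReal (K ((x - p.1) / p.2)) +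
      ENNReal.ofReal (1 - K ((x - p.1) / p.2)) = 1 := by
    intro p
    rw [← ENNReal.ofReal_add (hK0 _) (by linarith [hK1 ((x - p.1) / p.2)])]
    norm_num
  simp only [this, lintegral_const, measure_univ, mul_one]

lemma aux_Fbar_rep (G : Measure (ℝ × ℝ)) [IsProbabilityMeasure G]
    (K F : ℝ → ℝ) (hKm : Measurable K) (hK0 : ∀ y, 0 ≤ K y) (hK1 : ∀ y, K y ≤ 1)
    (hFrep : ∀ x, F x = (∫⁻ p, ENNReal.ofReal (K ((x - p.1) / p.2)) ∂G).toReal) (x : ℝ) :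
    1 - F x = (∫⁻ p, ENNReal.ofReal (1 - K ((x - p.1) / p.2)) ∂G).toReal := by
  have h := aux_add_one G K hKm hK0 hK1 x
  set I := ∫⁻ p, ENNReal.ofReal (K ((x - p.1) / p.2)) ∂G with hI
  set J := ∫⁻ p, ENNReal.ofReal (1 - K ((x - p.1) / p.2)) ∂G with hJ
  have hIle : I ≤ 1 := le_trans (by exact le_add_right le_rfl) h.le
  have hJeq : J = 1 - I := by
    rw [← h]; exact (ENNReal.add_sub_cancel_left (ne_top_of_le_ne_top (by simp) hIle)).symm
  rw [hFrep x, hJeq, ENNReal.toReal_sub_of_le hIle (by simp)]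
  simp
  rfl

lemma aux_Ibar_le_one (G : Measure (ℝ × ℝ)) [IsProbabilityMeasure G]
    (K : ℝ → ℝ) (hKm : Measurable K) (hK0 : ∀ y, 0 ≤ K y) (hK1 : ∀ y, K y ≤ 1) (x : ℝ) :
    (∫⁻ p, ENNReal.ofReal (1 - K ((x - p.1) / p.2)) ∂G) ≤ 1 := by
  have h := aux_add_one G K hKm hK0 hK1 x
  exact le_trans (by exact le_add_left le_rfl) h.le

lemma aux_Ibar_pos (G : Measure (ℝ × ℝ)) [IsProbabilityMeasure G] (hσ : ∀ᵐ p ∂G, 0 < p.2)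
    (K : ℝ → ℝ) (hKm : Measurable K) (hKlt : ∀ y, K y < 1) (x : ℝ) :
    0 < (∫⁻ p, ENNReal.ofReal (1 - K ((x - p.1) / p.2)) ∂G) := by
  by_contra h
  push_neg at h
  have h0 : (∫⁻ p, ENNReal.ofReal (1 - K ((x - p.1) / p.2)) ∂G) = 0 := le_antisymm h zero_le
  rw [lintegral_eq_zero_iff (by fun_prop)] at h0
  have : ∀ᵐ p ∂G, False := by
    filter_upwards [h0, hσ] with p hp hp2
    simp only [Pi.zero_apply, ENNReal.ofReal_eq_zero] at hp
    linarith [hKlt ((x - p.1) / p.2)]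
  rw [ae_iff] at this
  simp at this

lemma aux_exists_S (G : Measure (ℝ × ℝ)) [IsProbabilityMeasure G] (hσ : ∀ᵐ p ∂G, 0 < p.2) :
    ∃ n : ℕ, 1 ≤ n ∧ (1/2 : ℝ≥0∞) ≤ G {p : ℝ × ℝ | |p.1| ≤ n ∧ 1/(n:ℝ) ≤ p.2} := by
  set S : ℕ → Set (ℝ × ℝ) := fun n => {p : ℝ × ℝ | |p.1| ≤ n ∧ 1/((n:ℝ)+1) ≤ p.2} with hS
  have hmono : Monotone S := by
    intro a b hab p hp
    obtain ⟨h1, h2⟩ := hp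
    refine ⟨h1.trans (by exact_mod_cast Nat.cast_le.mpr hab), le_trans ?_ h2⟩
    apply one_div_le_one_div_of_le
    · positivity
    · have : (a:ℝ) ≤ b := by exact_mod_cast hab
      linarith
  have hunion : {p : ℝ × ℝ | 0 < p.2} ⊆ ⋃ n, S n := by
    intro p hp
    simp only [Set.mem_setOf_eq] at hp
    obtain ⟨n, hn⟩ := exists_nat_ge (max |p.1| (1/p.2))
    rw [Set.mem_iUnion]
    refine ⟨n, le_trans (le_max_left _ _) hn, ?_⟩
    rw [div_le_iff₀ (by positivity : (0:ℝ) < (n:ℝ)+1)]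
    rw [max_le_iff] at hn
    have h2 : 1/p.2 ≤ (n:ℝ) := hn.2
    rw [div_le_iff₀ hp] at h2
    nlinarith
  have hμu : (1:ℝ≥0∞) ≤ G (⋃ n, S n) := by
    have : G {p : ℝ × ℝ | 0 < p.2} = 1 := by
      rw [← measure_univ (μ := G)]
      apply measure_congr
      rw [Filter.eventuallyEq_set]
      filter_upwards [hσ] with p hp
      simp [hp]
    rw [← this]
    exact measure_mono hunion
  have htend : Tendsto (fun n => G (S n)) atTop (nhds (G (⋃ n, S n))) :=
    tendsto_measure_iUnion_atTop hmono
  have hev : ∀ᶠ n in atTop, (1/2 : ℝ≥0∞) ≤ G (S n) := by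
    apply htend.eventually
    apply eventually_ge_nhds
    calc (1/2 : ℝ≥0∞) < 1 := by norm_num
      _ ≤ G (⋃ n, S n) := hμu
  obtain ⟨n, hn⟩ := hev.exists
  refine ⟨n + 1, by omega, ?_⟩
  refine hn.trans (measure_mono ?_)
  intro p hp
  obtain ⟨h1, h2⟩ := hp
  constructor
  · push_cast; linarith
  · push_cast; push_cast at h2; linarith

lemma aux_lint_lower (G : Measure (ℝ × ℝ)) [IsProbabilityMeasure G]
    (K : ℝ → ℝ) (hKmono : Monotone K) (hKm : Measurable K)
    (n : ℕ) (hn : 1 ≤ n)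
    (hSn : (1/2 : ℝ≥0∞) ≤ G {p : ℝ × ℝ | |p.1| ≤ n ∧ 1/(n:ℝ) ≤ p.2})
    (x : ℝ) (hx : 0 ≤ x) :
    ENNReal.ofReal (1 - K ((n:ℝ) * (x + n))) * (1/2) ≤
      ∫⁻ p, ENNReal.ofReal (1 - K ((x - p.1) / p.2)) ∂G := by
  set S : Set (ℝ × ℝ) := {p : ℝ × ℝ | |p.1| ≤ n ∧ 1/(n:ℝ) ≤ p.2} with hSdef
  have hnR : (0:ℝ) < n := by exact_mod_cast hn
  have hstep1 : ∫⁻ p in S, ENNReal.ofReal (1 - K ((n:ℝ) * (x + n))) ∂G ≤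
      ∫⁻ p in S, ENNReal.ofReal (1 - K ((x - p.1) / p.2)) ∂G := by
    apply setLIntegral_mono (by fun_prop)
    intro p hp
    obtain ⟨h1, h2⟩ := hp
    apply ENNReal.ofReal_le_ofReal
    have hσpos : 0 < p.2 := lt_of_lt_of_le (by positivity) h2
    have harg : (x - p.1) / p.2 ≤ (n:ℝ) * (x + n) := by
      rw [div_le_iff₀ hσpos]
      have hm : -(n:ℝ) ≤ p.1 := (abs_le.mp h1).1
      have hns : 1 ≤ (n:ℝ) * p.2 := by
        rw [one_div] at h2
        calc (1:ℝ) = n * (n:ℝ)⁻¹ := by field_simp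
          _ ≤ n * p.2 := by
            apply mul_le_mul_of_nonneg_left h2 hnR.le
      nlinarith
    linarith [hKmono harg]
  have hstep2 : ENNReal.ofReal (1 - K ((n:ℝ) * (x + n))) * (1/2) ≤
      ∫⁻ p in S, ENNReal.ofReal (1 - K ((n:ℝ) * (x + n))) ∂G := by
    rw [setLIntegral_const]
    exact mul_le_mul_of_nonneg_left hSn zero_le
  calc ENNReal.ofReal (1 - K ((n:ℝ) * (x + n))) * (1/2)
      ≤ ∫⁻ p in S, ENNReal.ofReal (1 - K ((n:ℝ) * (x + n))) ∂G := hstep2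
    _ ≤ ∫⁻ p in S, ENNReal.ofReal (1 - K ((x - p.1) / p.2)) ∂G := hstep1
    _ ≤ ∫⁻ p, ENNReal.ofReal (1 - K ((x - p.1) / p.2)) ∂G := setLIntegral_le_lintegral _ _

lemma aux_markov (G : Measure (ℝ × ℝ)) [IsProbabilityMeasure G]
    (w : ℝ × ℝ → ℝ) (hw : Measurable w) (a m : ℝ) (ha : 0 < a) (hm : 0 < m)
    (hfin : ∫⁻ p, ENNReal.ofReal (w p ^ m) ∂G < ⊤) :
    (G {p : ℝ × ℝ | a ≤ w p}).toReal ≤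
      (∫⁻ p, ENNReal.ofReal (w p ^ m) ∂G).toReal / a ^ m := by
  set I := ∫⁻ p, ENNReal.ofReal (w p ^ m) ∂G with hI
  set ε := ENNReal.ofReal (a ^ m) with hε
  have hεpos : 0 < a ^ m := Real.rpow_pos_of_pos ha m
  have hε0 : ε ≠ 0 := by simp [hε, ENNReal.ofReal_eq_zero, not_le, hεpos]
  have hεtop : ε ≠ ⊤ := ENNReal.ofReal_ne_top
  have hsub : {p : ℝ × ℝ | a ≤ w p} ⊆ {p : ℝ × ℝ | ε ≤ ENNReal.ofReal (w p ^ m)} := by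
    intro p hp
    simp only [Set.mem_setOf_eq] at hp ⊢
    exact ENNReal.ofReal_le_ofReal (Real.rpow_le_rpow ha.le hp hm.le)
  have hmarkov : ε * G {p : ℝ × ℝ | ε ≤ ENNReal.ofReal (w p ^ m)} ≤ I :=
    mul_meas_ge_le_lintegral₀ (by fun_prop) ε
  have h1 : ε * G {p : ℝ × ℝ | a ≤ w p} ≤ I :=
    le_trans (mul_le_mul_of_nonneg_left (measure_mono hsub) zero_le) hmarkov
  have h2 : G {p : ℝ × ℝ | a ≤ w p} ≤ I / ε := by
    rw [ENNReal.le_div_iff_mul_le (Or.inl hε0) (Or.inl hεtop), mul_comm]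
    exact h1
  calc (G {p : ℝ × ℝ | a ≤ w p}).toReal ≤ (I / ε).toReal := by
        apply ENNReal.toReal_mono _ h2
        exact (ENNReal.div_lt_top hfin.ne hε0).ne
    _ = I.toReal / a ^ m := by
        rw [ENNReal.toReal_div, hε, ENNReal.toReal_ofReal hεpos.le]

lemma aux_tail (G : Measure (ℝ × ℝ)) [IsProbabilityMeasure G]
    (hμmom : ∀ m : ℝ, 0 < m → ∫⁻ p, ENNReal.ofReal (|p.1| ^ m) ∂G < ⊤)
    (hσmom : ∀ m : ℝ, 0 < m → ∫⁻ p, ENNReal.ofReal (p.2 ^ m) ∂G < ⊤)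
    (b δ : ℝ) (hb : 0 ≤ b) (hδ : 0 < δ) (hδ1 : δ < 1) :
    ∃ C : ℝ, 0 ≤ C ∧ ∀ x : ℝ, 2 ≤ x →
      (G {p : ℝ × ℝ | (x - p.1) / p.2 < x ^ (1 - δ) ∧ 0 < p.2}).toReal ≤
        C * x ^ (-(b + 1)) := by
  set m₁ := b + 1 with hm₁
  set m₂ := (b + 1) / δ with hm₂
  have hm₁pos : 0 < m₁ := by positivity
  have hm₂pos : 0 < m₂ := by positivity
  set E₁ := (∫⁻ p, ENNReal.ofReal (|p.1| ^ m₁) ∂G).toReal with hE₁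
  set E₂ := (∫⁻ p, ENNReal.ofReal (p.2 ^ m₂) ∂G).toReal with hE₂
  have hE₁0 : 0 ≤ E₁ := ENNReal.toReal_nonneg
  have hE₂0 : 0 ≤ E₂ := ENNReal.toReal_nonneg
  refine ⟨(2:ℝ) ^ m₁ * E₁ + (2:ℝ) ^ m₂ * E₂, by positivity, ?_⟩
  intro x hx
  have hxpos : (0:ℝ) < x := by linarith
  set B := {p : ℝ × ℝ | (x - p.1) / p.2 < x ^ (1 - δ) ∧ 0 < p.2} with hB
  set B₁ := {p : ℝ × ℝ | x/2 ≤ |p.1|} with hB₁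
  set B₂ := {p : ℝ × ℝ | x ^ δ / 2 ≤ p.2} with hB₂
  have hsub : B ⊆ B₁ ∪ B₂ := by
    intro p hp
    obtain ⟨h1, h2⟩ := hp
    rw [div_lt_iff₀ h2] at h1
    by_contra hcon
    simp only [hB₁, hB₂, Set.mem_union, Set.mem_setOf_eq, not_or, not_le] at hcon
    obtain ⟨hc1, hc2⟩ := hcon
    have hμlt : p.1 < x/2 := lt_of_le_of_lt (le_abs_self _) hc1
    have hpow : x ^ δ * x ^ (1 - δ) = x := by
      rw [← Real.rpow_add hxpos]; norm_num
    have hppos : 0 < x ^ (1 - δ) := Real.rpow_pos_of_pos hxpos _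
    nlinarith
  have hmark1 : (G B₁).toReal ≤ E₁ / (x/2) ^ m₁ :=
    aux_markov G (fun p => |p.1|) (by fun_prop) (x/2) m₁ (by linarith) hm₁pos (hμmom m₁ hm₁pos)
  have hmark2 : (G B₂).toReal ≤ E₂ / (x ^ δ / 2) ^ m₂ :=
    aux_markov G (fun p => p.2) (by fun_prop) (x ^ δ / 2) m₂
      (by positivity) hm₂pos (hσmom m₂ hm₂pos)
  have hcomb : (G B).toReal ≤ (G B₁).toReal + (G B₂).toReal := by
    calc (G B).toReal ≤ (G (B₁ ∪ B₂)).toReal :=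
          ENNReal.toReal_mono (measure_ne_top G _) (measure_mono hsub)
      _ ≤ (G B₁ + G B₂).toReal :=
          ENNReal.toReal_mono (by
            exact ENNReal.add_ne_top.mpr ⟨measure_ne_top G _, measure_ne_top G _⟩)
            (measure_union_le _ _)
      _ = (G B₁).toReal + (G B₂).toReal :=
          ENNReal.toReal_add (measure_ne_top G _) (measure_ne_top G _)
  have heq1 : E₁ / (x/2) ^ m₁ = (2:ℝ) ^ m₁ * E₁ * x ^ (-(b+1)) := by
    rw [Real.div_rpow hxpos.le (by norm_num), Real.rpow_neg hxpos.le]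
    rw [div_div_eq_mul_div, div_eq_mul_inv, hm₁]
    ring
  have heq2 : E₂ / (x ^ δ / 2) ^ m₂ = (2:ℝ) ^ m₂ * E₂ * x ^ (-(b+1)) := by
    rw [Real.div_rpow (by positivity) (by norm_num), ← Real.rpow_mul hxpos.le,
      mul_div_cancel₀ _ hδ.ne', Real.rpow_neg hxpos.le, div_div_eq_mul_div, div_eq_mul_inv]
    ring
  calc (G B).toReal ≤ (G B₁).toReal + (G B₂).toReal := hcomb
    _ ≤ E₁ / (x/2) ^ m₁ + E₂ / (x ^ δ / 2) ^ m₂ := by linarith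
    _ = ((2:ℝ) ^ m₁ * E₁ + (2:ℝ) ^ m₂ * E₂) * x ^ (-(b+1)) := by
        rw [heq1, heq2]; ring

lemma aux_Fbar_upper (G : Measure (ℝ × ℝ)) [IsProbabilityMeasure G] (hσ : ∀ᵐ p ∂G, 0 < p.2)
    (K : ℝ → ℝ) (hKm : Measurable K) (hKmono : Monotone K)
    (hK0 : ∀ y, 0 ≤ K y) (hK1 : ∀ y, K y ≤ 1) (x y : ℝ) :
    (∫⁻ p, ENNReal.ofReal (1 - K ((x - p.1) / p.2)) ∂G).toReal ≤
      (1 - K y) + (G {p : ℝ × ℝ | (x - p.1) / p.2 < y ∧ 0 < p.2}).toReal := by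
  set B := {p : ℝ × ℝ | (x - p.1) / p.2 < y ∧ 0 < p.2} with hB
  have hBmeas : MeasurableSet B := by
    rw [hB, Set.setOf_and]
    exact (measurableSet_lt (by fun_prop : Measurable fun p : ℝ × ℝ => (x - p.1) / p.2)
      measurable_const).inter
      (measurableSet_lt measurable_const (by fun_prop : Measurable fun p : ℝ × ℝ => p.2))
  have hae : ∀ᵐ p ∂G, ENNReal.ofReal (1 - K ((x - p.1) / p.2)) ≤
      ENNReal.ofReal (1 - K y) + B.indicator (1 : ℝ × ℝ → ℝ≥0∞) p := by
    filter_upwards [hσ] with p hp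
    by_cases hmem : p ∈ B
    · rw [Set.indicator_of_mem hmem]
      simp only [Pi.one_apply]
      calc ENNReal.ofReal (1 - K ((x - p.1) / p.2)) ≤ 1 := by
            apply ENNReal.ofReal_le_one.mpr
            linarith [hK0 ((x - p.1) / p.2)]
        _ ≤ _ := le_add_self
    · rw [Set.indicator_of_notMem hmem, add_zero]
      have harge : y ≤ (x - p.1) / p.2 := by
        by_contra hlt
        push_neg at hlt
        exact hmem ⟨hlt, hp⟩
      exact ENNReal.ofReal_le_ofReal (by linarith [hKmono harge])
  have hint : (∫⁻ p, ENNReal.ofReal (1 - K ((x - p.1) / p.2)) ∂G) ≤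
      ENNReal.ofReal (1 - K y) + G B := by
    calc (∫⁻ p, ENNReal.ofReal (1 - K ((x - p.1) / p.2)) ∂G) ≤
        ∫⁻ p, (ENNReal.ofReal (1 - K y) + B.indicator (1 : ℝ × ℝ → ℝ≥0∞) p) ∂G :=
          lintegral_mono_ae hae
      _ = ENNReal.ofReal (1 - K y) + G B := by
          rw [lintegral_add_left measurable_const, lintegral_const, measure_univ, mul_one,
            lintegral_indicator_one hBmeas]
  calc (∫⁻ p, ENNReal.ofReal (1 - K ((x - p.1) / p.2)) ∂G).toReal ≤
      (ENNReal.ofReal (1 - K y) + G B).toReal := by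
        apply ENNReal.toReal_mono _ hint
        exact ENNReal.add_ne_top.mpr ⟨ENNReal.ofReal_ne_top, measure_ne_top G _⟩
    _ = (1 - K y) + (G B).toReal := by
        rw [ENNReal.toReal_add ENNReal.ofReal_ne_top (measure_ne_top G _),
          ENNReal.toReal_ofReal (by linarith [hK1 y])]

lemma aux_ratio_tendsto (n : ℕ) (hn : 1 ≤ n) :
    Tendsto (fun x : ℝ => Real.log ((n:ℝ) * (x + n)) / Real.log x) atTop (nhds 1) := by
  have hnR : (0:ℝ) < n := by exact_mod_cast hn
  have heq : ∀ᶠ x in atTop, Real.log ((n:ℝ) * (x + n)) / Real.log x =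
      1 + (Real.log n + Real.log (1 + n / x)) / Real.log x := by
    filter_upwards [eventually_ge_atTop (2:ℝ)] with x hx
    have hxpos : (0:ℝ) < x := by linarith
    have hlogx : Real.log x ≠ 0 := (Real.log_pos (by linarith)).ne'
    have h1 : (0:ℝ) < 1 + n / x := by positivity
    have hprod : (n:ℝ) * (x + n) = n * ((1 + n/x) * x) := by field_simp
    rw [hprod, Real.log_mul hnR.ne' (by positivity), Real.log_mul h1.ne' hxpos.ne']
    field_simp
    ring
  have hlim : Tendsto (fun x : ℝ => 1 + (Real.log n + Real.log (1 + n / x)) / Real.log x)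
      atTop (nhds 1) := by
    have h2 : Tendsto (fun x : ℝ => Real.log (1 + n / x)) atTop (nhds 0) := by
      have h3 : Tendsto (fun x : ℝ => 1 + n / x) atTop (nhds 1) := by
        have h5 : Tendsto (fun x : ℝ => (n:ℝ) / x) atTop (nhds 0) :=
          Tendsto.div_atTop tendsto_const_nhds tendsto_id
        simpa using (tendsto_const_nhds (x := (1:ℝ)) (f := atTop (α := ℝ))).add h5
      have : Tendsto (fun x : ℝ => Real.log (1 + n / x)) atTop (nhds (Real.log 1)) :=
        ((Real.continuousAt_log one_ne_zero).tendsto.comp h3)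
      simpa using this
    have h4 : Tendsto (fun x : ℝ => (Real.log n + Real.log (1 + n / x)) / Real.log x)
        atTop (nhds 0) :=
      ((tendsto_const_nhds.add h2).div_atTop Real.tendsto_log_atTop)
    simpa using (tendsto_const_nhds (x := (1:ℝ))).add h4
  exact hlim.congr' (by filter_upwards [heq] with x h; exact h.symm)

lemma aux_ereal_mul_add (u r g : ℝ → ℝ) (a : EReal)
    (hu : Tendsto u atTop (nhds 0)) (hr : Tendsto r atTop (nhds 1))
    (hg : Tendsto (fun x => ((g x : ℝ) : EReal)) atTop (nhds a)) :
    Tendsto (fun x => ((u x + r x * g x : ℝ) : EReal)) atTop (nhds a) := by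
  have hmul : Tendsto (fun x => ((r x * g x : ℝ) : EReal)) atTop (nhds a) := by
    have hpair : Tendsto (fun x => (((r x : ℝ) : EReal), ((g x : ℝ) : EReal))) atTop
        (nhds (((1:ℝ):EReal), a)) :=
      (EReal.tendsto_coe.mpr hr).prodMk_nhds hg
    have hcont : ContinuousAt (fun p : EReal × EReal => p.1 * p.2) (((1:ℝ):EReal), a) := by
      refine EReal.continuousAt_mul (Or.inl (by norm_num)) (Or.inl (by norm_num))
        (Or.inl (EReal.coe_ne_bot _)) (Or.inl (EReal.coe_ne_top _))
    have := hcont.tendsto.comp hpair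
    simp only [Function.comp_def] at this
    rw [show ((1:ℝ):EReal) * a = a by rw [EReal.coe_one, one_mul]] at this
    exact this.congr fun x => (EReal.coe_mul _ _).symm
  have hpair : Tendsto (fun x => (((u x : ℝ) : EReal), ((r x * g x : ℝ) : EReal))) atTop
      (nhds (((0:ℝ):EReal), a)) :=
    (EReal.tendsto_coe.mpr hu).prodMk_nhds hmul
  have hcont : ContinuousAt (fun p : EReal × EReal => p.1 + p.2) (((0:ℝ):EReal), a) := by
    apply EReal.continuousAt_add
    · left; simp
    · left; simp
  have := hcont.tendsto.comp hpair
  simp only [Function.comp_def] at this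
  rw [show ((0:ℝ):EReal) + a = a by rw [EReal.coe_zero, zero_add]] at this
  exact this.congr fun x => (EReal.coe_add _ _).symm
set_option maxHeartbeats 2000000 in
theorem stmt_10 (k : ℝ → ℝ) (hk_meas : Measurable k) (hk_pos : ∀ x, 0 < k x)
    (hk_int : ∫⁻ x, ENNReal.ofReal (k x) = 1)
    (G : Measure (ℝ × ℝ)) [IsProbabilityMeasure G] (hσ : ∀ᵐ p ∂G, 0 < p.2)
    (hμmom : ∀ m : ℝ, 0 < m → ∫⁻ p, ENNReal.ofReal (|p.1| ^ m) ∂G < ⊤)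
    (hσmom : ∀ m : ℝ, 0 < m → ∫⁻ p, ENNReal.ofReal (p.2 ^ m) ∂G < ⊤)
    (K F : ℝ → ℝ)
    (hK : ∀ x, K x = (∫⁻ t in Set.Iic x, ENNReal.ofReal (k t)).toReal)
    (hF : ∀ x, F x = (∫⁻ t in Set.Iic x,
        ∫⁻ p, ENNReal.ofReal ((1 / p.2) * k ((t - p.1) / p.2)) ∂G).toReal)
    (αK αF : EReal)
    (hαK : Tendsto (fun x : ℝ => ((-Real.log (1 - K x) / Real.log x : ℝ) : EReal))
      atTop (nhds αK))
    (hαF : Tendsto (fun x : ℝ => ((-Real.log (1 - F x) / Real.log x : ℝ) : EReal))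
      atTop (nhds αF)) :
    αF = αK := by
  -- basic facts about K
  have hK0 : ∀ y, 0 ≤ K y := aux_K_nonneg hK
  have hK1 : ∀ y, K y ≤ 1 := aux_K_le_one hk_int hK
  have hKlt : ∀ y, K y < 1 := aux_K_lt_one hk_meas hk_pos hk_int hK
  have hKmono : Monotone K := aux_K_mono hk_int hK
  have hKm : Measurable K := hKmono.measurable
  have hKbar_pos : ∀ y, (0:ℝ) < 1 - K y := fun y => by linarith [hKlt y]
  have hFrep : ∀ x, F x = (∫⁻ p, ENNReal.ofReal (K ((x - p.1) / p.2)) ∂G).toReal :=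
    aux_F_rep k hk_meas hk_int G hσ K F hK hF
  have hFbar : ∀ x, 1 - F x = (∫⁻ p, ENNReal.ofReal (1 - K ((x - p.1) / p.2)) ∂G).toReal :=
    aux_Fbar_rep G K F hKm hK0 hK1 hFrep
  have hJle1 : ∀ x, (∫⁻ p, ENNReal.ofReal (1 - K ((x - p.1) / p.2)) ∂G) ≤ 1 :=
    aux_Ibar_le_one G K hKm hK0 hK1
  have hJne : ∀ x, (∫⁻ p, ENNReal.ofReal (1 - K ((x - p.1) / p.2)) ∂G) ≠ ⊤ :=
    fun x => ne_top_of_le_ne_top (by simp) (hJle1 x)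
  have hFbar_pos : ∀ x, (0:ℝ) < 1 - F x := fun x => by
    rw [hFbar x]
    exact ENNReal.toReal_pos (aux_Ibar_pos G hσ K hKm hKlt x).ne' (hJne x)
  have hFbar_le1 : ∀ x, 1 - F x ≤ 1 := fun x => by
    rw [hFbar x]
    calc (∫⁻ p, ENNReal.ofReal (1 - K ((x - p.1) / p.2)) ∂G).toReal ≤ (1:ℝ≥0∞).toReal :=
        ENNReal.toReal_mono (by simp) (hJle1 x)
      _ = 1 := by simp
  -- αF is nonnegative
  have hαF0 : (0:EReal) ≤ αF := by
    refine ge_of_tendsto hαF ?_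
    filter_upwards [eventually_ge_atTop (2:ℝ)] with x hx
    have hlx : 0 < Real.log x := Real.log_pos (by linarith)
    have h1 : Real.log (1 - F x) ≤ 0 :=
      Real.log_nonpos (by linarith [hFbar_pos x]) (hFbar_le1 x)
    have h2 : (0:ℝ) ≤ -Real.log (1 - F x) / Real.log x := div_nonneg (by linarith) hlx.le
    rw [← EReal.coe_zero]
    exact EReal.coe_le_coe_iff.mpr h2
  -- Direction 1 : αF ≤ αK
  obtain ⟨n, hn1, hSn⟩ := aux_exists_S G hσ
  have hnR : (0:ℝ) < n := by exact_mod_cast hn1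
  have hnR1 : (1:ℝ) ≤ n := by exact_mod_cast hn1
  have hhalf : ((1:ℝ≥0∞)/2).toReal = 1/2 := by
    rw [ENNReal.toReal_div]; simp
  have hlow : ∀ x : ℝ, 0 ≤ x → (1 - K ((n:ℝ) * (x + n)))/2 ≤ 1 - F x := by
    intro x hx
    rw [hFbar x]
    have h2 := ENNReal.toReal_mono (hJne x) (aux_lint_lower G K hKmono hKm n hn1 hSn x hx)
    rw [ENNReal.toReal_mul, ENNReal.toReal_ofReal (by linarith [hKlt ((n:ℝ)*(x+n))]),
      hhalf] at h2
    linarith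
  have hφ : Tendsto (fun x : ℝ => (n:ℝ) * (x + n)) atTop atTop := by
    apply tendsto_atTop_mono' atTop (show (fun x : ℝ => x) ≤ᶠ[atTop] fun x => (n:ℝ) * (x + n) by
      filter_upwards [eventually_ge_atTop (0:ℝ)] with x hx
      nlinarith) tendsto_id
  have hαFK : αF ≤ αK := by
    refine le_of_tendsto_of_tendsto hαF
      (aux_ereal_mul_add (fun x => Real.log 2 / Real.log x)
        (fun x => Real.log ((n:ℝ) * (x + n)) / Real.log x)
        (fun x => -Real.log (1 - K ((n:ℝ) * (x + n))) / Real.log ((n:ℝ) * (x + n))) αK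
        (Tendsto.div_atTop tendsto_const_nhds Real.tendsto_log_atTop)
        (aux_ratio_tendsto n hn1) ?_) ?_
    · have := hαK.comp hφ
      simpa [Function.comp_def] using this
    · filter_upwards [eventually_ge_atTop (2:ℝ)] with x hx
      have hx0 : (0:ℝ) < x := by linarith
      have hlx : 0 < Real.log x := Real.log_pos (by linarith)
      have hφx : (2:ℝ) ≤ (n:ℝ) * (x + n) := by nlinarith
      have hlφ : 0 < Real.log ((n:ℝ) * (x + n)) := Real.log_pos (by linarith)
      have hKφ := hKbar_pos ((n:ℝ) * (x + n))
      have h1 : -Real.log (1 - F x) ≤ Real.log 2 - Real.log (1 - K ((n:ℝ) * (x + n))) := by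
        have hmon : Real.log ((1 - K ((n:ℝ) * (x + n)))/2) ≤ Real.log (1 - F x) :=
          Real.log_le_log (by positivity) (hlow x (by linarith))
        rw [Real.log_div hKφ.ne' (by norm_num)] at hmon
        have : Real.log 2 = Real.log 2 := rfl
        have h2 : Real.log (2:ℝ) = Real.log 2 := rfl
        linarith [hmon]
      have h3 : -Real.log (1 - F x) / Real.log x ≤
          (Real.log 2 - Real.log (1 - K ((n:ℝ) * (x + n)))) / Real.log x :=
        div_le_div_of_nonneg_right h1 hlx.le
      have h4 : (Real.log 2 - Real.log (1 - K ((n:ℝ) * (x + n)))) / Real.log x =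
          Real.log 2 / Real.log x + (Real.log ((n:ℝ) * (x + n)) / Real.log x) *
            (-Real.log (1 - K ((n:ℝ) * (x + n))) / Real.log ((n:ℝ) * (x + n))) := by
        field_simp
        ring
      exact EReal.coe_le_coe_iff.mpr (by rw [← h4]; exact h3)
  -- Direction 2 : αK ≤ αF
  have hmain : ∀ b : ℝ, 0 ≤ b → (b:EReal) < αK → (b:EReal) ≤ αF := by
    intro b hb hbK
    obtain ⟨b'', hb1, hb2⟩ := EReal.exists_between_coe_real hbK
    have hbb : b < b'' := EReal.coe_lt_coe_iff.mp hb1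
    have hb''pos : 0 < b'' := lt_of_le_of_lt hb hbb
    set δ := (b'' - b)/(2*b'') with hδdef
    have hδpos : 0 < δ := by rw [hδdef]; exact div_pos (by linarith) (by linarith)
    have hδ1 : δ < 1 := by rw [hδdef, div_lt_one (by positivity)]; linarith
    set η := (b'' - b)/2 with hηdef
    have hηpos : 0 < η := by rw [hηdef]; linarith
    have hkey : (1 - δ) * b'' = b + η := by
      rw [hδdef, hηdef]
      field_simp
      ring
    set ε := min η 1 with hεdef
    have hεpos : 0 < ε := lt_min hηpos one_pos
    have hεη : ε ≤ η := min_le_left _ _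
    have hε1 : ε ≤ 1 := min_le_right _ _
    obtain ⟨C, hC0, hC⟩ := aux_tail G hμmom hσmom b δ hb hδpos hδ1
    have hgev : ∀ᶠ y in atTop, 1 - K y ≤ y ^ (-b'') := by
      have hev1 : ∀ᶠ y in atTop,
          (b'':EReal) < ((-Real.log (1 - K y) / Real.log y : ℝ) : EReal) :=
        hαK.eventually (eventually_gt_nhds hb2)
      filter_upwards [hev1, eventually_ge_atTop (2:ℝ)] with y h1 h2
      have hy0 : (0:ℝ) < y := by linarith
      have hly : 0 < Real.log y := Real.log_pos (by linarith)
      have h1' : b'' < -Real.log (1 - K y) / Real.log y := EReal.coe_lt_coe_iff.mp h1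
      rw [lt_div_iff₀ hly] at h1'
      have h4 : Real.log (1 - K y) < Real.log (y ^ (-b'')) := by
        rw [Real.log_rpow hy0]
        nlinarith
      exact le_of_lt
        ((Real.log_lt_log_iff (hKbar_pos y) (Real.rpow_pos_of_pos hy0 _)).mp h4)
    have hcomp : Tendsto (fun x : ℝ => x ^ (1 - δ)) atTop atTop :=
      tendsto_rpow_atTop (by linarith)
    have hKbd : ∀ᶠ x in atTop, 1 - K (x ^ (1 - δ)) ≤ x ^ (-(b + η)) := by
      filter_upwards [hcomp.eventually hgev, eventually_ge_atTop (1:ℝ)] with x h1 hx1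
      have hx0 : (0:ℝ) < x := by linarith
      calc 1 - K (x ^ (1 - δ)) ≤ (x ^ (1 - δ)) ^ (-b'') := h1
        _ = x ^ ((1 - δ) * (-b'')) := by rw [← Real.rpow_mul hx0.le]
        _ = x ^ (-(b + η)) := by
            congr 1
            nlinarith [hkey]
    have hFub : ∀ᶠ x in atTop, 1 - F x ≤ (1 + C) * x ^ (-(b + ε)) := by
      filter_upwards [hKbd, eventually_ge_atTop (2:ℝ)] with x h1 hx2
      have hx1 : (1:ℝ) ≤ x := by linarith
      have hx0 : (0:ℝ) < x := by linarith
      have h2 : 1 - F x ≤ (1 - K (x ^ (1 - δ))) +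
          (G {p : ℝ × ℝ | (x - p.1) / p.2 < x ^ (1 - δ) ∧ 0 < p.2}).toReal := by
        rw [hFbar x]
        exact aux_Fbar_upper G hσ K hKm hKmono hK0 hK1 x (x ^ (1 - δ))
      have h3 : (G {p : ℝ × ℝ | (x - p.1) / p.2 < x ^ (1 - δ) ∧ 0 < p.2}).toReal ≤
          C * x ^ (-(b + 1)) := hC x hx2
      have h4 : x ^ (-(b + η)) ≤ x ^ (-(b + ε)) :=
        Real.rpow_le_rpow_of_exponent_le hx1 (by linarith)
      have h5 : x ^ (-(b + 1)) ≤ x ^ (-(b + ε)) :=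
        Real.rpow_le_rpow_of_exponent_le hx1 (by linarith)
      have h6 : C * x ^ (-(b + 1)) ≤ C * x ^ (-(b + ε)) :=
        mul_le_mul_of_nonneg_left h5 hC0
      calc 1 - F x ≤ x ^ (-(b + η)) + C * x ^ (-(b + 1)) := by linarith
        _ ≤ x ^ (-(b + ε)) + C * x ^ (-(b + ε)) := by linarith
        _ = (1 + C) * x ^ (-(b + ε)) := by ring
    have hsmall : ∀ᶠ x in atTop, Real.log (1 + C) / Real.log x ≤ ε :=
      (Tendsto.div_atTop tendsto_const_nhds Real.tendsto_log_atTop).eventually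
        (eventually_le_nhds hεpos)
    refine ge_of_tendsto hαF ?_
    filter_upwards [hFub, hsmall, eventually_ge_atTop (2:ℝ)] with x h1 h2 hx2
    have hx0 : (0:ℝ) < x := by linarith
    have hlx : 0 < Real.log x := Real.log_pos (by linarith)
    have hlog : Real.log (1 - F x) ≤ Real.log ((1 + C) * x ^ (-(b + ε))) :=
      Real.log_le_log (hFbar_pos x) h1
    rw [Real.log_mul (by positivity) (Real.rpow_pos_of_pos hx0 _).ne',
      Real.log_rpow hx0] at hlog
    have h7 : b ≤ -Real.log (1 - F x) / Real.log x := by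
      rw [le_div_iff₀ hlx]
      rw [div_le_iff₀ hlx] at h2
      nlinarith
    exact EReal.coe_le_coe_iff.mpr h7
  have hαKF : αK ≤ αF := by
    by_contra hcon
    push_neg at hcon
    obtain ⟨c, hc1, hc2⟩ := EReal.exists_between_coe_real hcon
    have hc0 : (0:ℝ) ≤ c := by
      have : ((0:ℝ):EReal) < (c:EReal) := by
        rw [EReal.coe_zero]
        exact lt_of_le_of_lt hαF0 hc1
      exact (EReal.coe_lt_coe_iff.mp this).le
    exact absurd (lt_of_le_of_lt (hmain c hc0 hc2) hc1) (lt_irrefl _)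
  exact le_antisymm hαFK hαKF
end

section
/- Let F(x) = Σ_{i=1}^N w_i K((x-μ_i)/σ_i) be a finite location-scale mixture with weights w_i > 0 summing to 1, σ_i > 0, where K is the cdf of a density k with full support on ℝ and right tail index α_+(K). Then α_+(F) = α_+(K); in particular the tail index of a finite location-scale mixture does not depend on the mixing parameters (w_i, μ_i, σ_i). -/
open MeasureTheory Filter Set
open scoped ENNReal

private lemma ereal_tendsto_mul_one {g r : ℝ → ℝ} {αK : EReal}
    (hg : Tendsto (fun x : ℝ => ((g x : ℝ) : EReal)) atTop (nhds αK))
    (hr : Tendsto r atTop (nhds 1)) :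
    Tendsto (fun x : ℝ => ((g x * r x : ℝ) : EReal)) atTop (nhds αK) := by
  have hcont : ContinuousAt (fun p : EReal × EReal => p.1 * p.2) (αK, ((1 : ℝ) : EReal)) := by
    apply EReal.continuousAt_mul
    · exact Or.inr (EReal.coe_ne_bot 1)
    · exact Or.inr (EReal.coe_ne_top 1)
    · exact Or.inr (by norm_num)
    · exact Or.inr (by norm_num)
  have hr' : Tendsto (fun x : ℝ => ((r x : ℝ) : EReal)) atTop (nhds ((1 : ℝ) : EReal)) :=
    EReal.tendsto_coe.2 hr
  have := hcont.tendsto.comp (hg.prodMk_nhds hr')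
  simp only [Function.comp] at this
  have h1 : (((1 : ℝ) : EReal)) = (1 : EReal) := rfl
  rw [h1, mul_one] at this
  refine this.congr fun x => ?_
  exact (EReal.coe_mul _ _).symm

private lemma ereal_tendsto_add_zero {g c : ℝ → ℝ} {αK : EReal}
    (hg : Tendsto (fun x : ℝ => ((g x : ℝ) : EReal)) atTop (nhds αK))
    (hc : Tendsto c atTop (nhds 0)) :
    Tendsto (fun x : ℝ => ((g x + c x : ℝ) : EReal)) atTop (nhds αK) := by
  have hcont : ContinuousAt (fun p : EReal × EReal => p.1 + p.2) (αK, ((0 : ℝ) : EReal)) := by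
    apply EReal.continuousAt_add
    · exact Or.inr (EReal.coe_ne_bot 0)
    · exact Or.inr (EReal.coe_ne_top 0)
  have hc' : Tendsto (fun x : ℝ => ((c x : ℝ) : EReal)) atTop (nhds ((0 : ℝ) : EReal)) :=
    EReal.tendsto_coe.2 hc
  have := hcont.tendsto.comp (hg.prodMk_nhds hc')
  simp only [Function.comp] at this
  have h0 : (((0 : ℝ) : EReal)) = (0 : EReal) := rfl
  rw [h0, add_zero] at this
  refine this.congr fun x => ?_
  exact (EReal.coe_add _ _).symm

private lemma tail_comp (K : ℝ → ℝ) (αK : EReal)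
    (hαK : Tendsto (fun x : ℝ => ((-Real.log (1 - K x) / Real.log x : ℝ) : EReal))
      atTop (nhds αK)) (a b : ℝ) (hb : 0 < b) :
    Tendsto (fun x : ℝ => ((-Real.log (1 - K ((x - a) / b)) / Real.log x : ℝ) : EReal))
      atTop (nhds αK) := by
  have hy : Tendsto (fun x : ℝ => (x - a) / b) atTop atTop := by
    apply Tendsto.atTop_div_const hb
    exact tendsto_atTop_add_const_right atTop (-a) tendsto_id |>.congr
      fun x => (sub_eq_add_neg x a).symm
  have hg : Tendsto
      (fun x : ℝ => ((-Real.log (1 - K ((x - a) / b)) / Real.log ((x - a) / b) : ℝ) : EReal))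
      atTop (nhds αK) := hαK.comp hy
  -- the ratio of logs tends to 1
  have h2 : Tendsto (fun x : ℝ => (Real.log x)⁻¹) atTop (nhds 0) :=
    tendsto_inv_atTop_zero.comp Real.tendsto_log_atTop
  have h0 : Tendsto (fun x : ℝ => ((x - a) / b) / x) atTop (nhds b⁻¹) := by
    have h0' : Tendsto (fun x : ℝ => (1 - a * x⁻¹) * b⁻¹) atTop (nhds ((1 - a * 0) * b⁻¹)) :=
      ((tendsto_const_nhds.sub (tendsto_inv_atTop_zero.const_mul a)).mul_const b⁻¹)
    rw [mul_zero, sub_zero, one_mul] at h0'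
    refine h0'.congr' ?_
    filter_upwards [eventually_gt_atTop (0 : ℝ)] with x hx
    have hxne : x ≠ 0 := ne_of_gt hx
    rw [div_div, mul_comm b x, ← div_div, sub_div, div_self hxne, div_eq_mul_inv (1 - a / x) b,
      div_eq_mul_inv a x]
  have h1 : Tendsto (fun x : ℝ => Real.log ((x - a) / b) - Real.log x) atTop
      (nhds (Real.log b⁻¹)) := by
    have hcomp := (Real.continuousAt_log (inv_ne_zero hb.ne')).tendsto.comp h0
    refine hcomp.congr' ?_
    filter_upwards [hy.eventually_ge_atTop 1, eventually_ge_atTop (1 : ℝ)] with x hx1 hx2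
    simp only [Function.comp]
    rw [Real.log_div (by linarith) (by linarith)]
  have hr : Tendsto (fun x : ℝ => Real.log ((x - a) / b) / Real.log x) atTop (nhds 1) := by
    have := (h1.mul h2).add_const 1
    rw [mul_zero, zero_add] at this
    refine this.congr' ?_
    filter_upwards [eventually_ge_atTop (2 : ℝ)] with x hx
    have hlx : Real.log x ≠ 0 := (Real.log_pos (by linarith)).ne'
    field_simp
    ring
  have := ereal_tendsto_mul_one hg hr
  refine this.congr' ?_
  filter_upwards [hy.eventually_ge_atTop 2] with x hx
  have hly : Real.log ((x - a) / b) ≠ 0 := (Real.log_pos (by linarith)).ne'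
  congr 1
  rw [div_mul_div_comm, mul_comm (-Real.log (1 - K ((x - a) / b))) (Real.log ((x - a) / b)),
    mul_div_mul_left _ _ hly]

theorem stmt_12 (k : ℝ → ℝ) (hk_meas : Measurable k) (hk_pos : ∀ x, 0 < k x)
    (hk_int : ∫⁻ x, ENNReal.ofReal (k x) = 1)
    (K : ℝ → ℝ) (hK : ∀ x, K x = (∫⁻ t in Set.Iic x, ENNReal.ofReal (k t)).toReal)
    (N : ℕ) (hN : 0 < N) (w μ σ : Fin N → ℝ)
    (hw : ∀ i, 0 < w i) (hwsum : ∑ i, w i = 1) (hσ : ∀ i, 0 < σ i)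
    (F : ℝ → ℝ) (hF : ∀ x, F x = ∑ i, w i * K ((x - μ i) / σ i))
    (αK : EReal)
    (hαK : Tendsto (fun x : ℝ => ((-Real.log (1 - K x) / Real.log x : ℝ) : EReal))
      atTop (nhds αK)) :
    Tendsto (fun x : ℝ => ((-Real.log (1 - F x) / Real.log x : ℝ) : EReal))
      atTop (nhds αK) := by
  -- basic tail facts for K
  have key : ∀ x : ℝ,
      (∫⁻ t in Set.Iic x, ENNReal.ofReal (k t)) + (∫⁻ t in Set.Ioi x, ENNReal.ofReal (k t))
        = 1 := by
    intro x
    have h := lintegral_add_compl (μ := volume) (fun t => ENNReal.ofReal (k t))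
      (measurableSet_Iic (a := x))
    rw [compl_Iic] at h
    exact h.trans hk_int
  have hIoi_pos : ∀ x : ℝ, 0 < ∫⁻ t in Set.Ioi x, ENNReal.ofReal (k t) := by
    intro x
    rw [pos_iff_ne_zero]
    intro h0
    rw [lintegral_eq_zero_iff hk_meas.ennreal_ofReal, Filter.EventuallyEq, ae_iff] at h0
    have huniv : {t : ℝ | ¬ ENNReal.ofReal (k t) = (0 : ℝ → ℝ≥0∞) t} = Set.univ := by
      refine eq_univ_of_forall fun t => ?_
      simp [ENNReal.ofReal_eq_zero, not_le, hk_pos t]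
    rw [huniv, Measure.restrict_apply_univ, Real.volume_Ioi] at h0
    exact ENNReal.top_ne_zero h0
  have hIoi_ne_top : ∀ x : ℝ, (∫⁻ t in Set.Ioi x, ENNReal.ofReal (k t)) ≠ ⊤ := by
    intro x
    refine ne_top_of_le_ne_top ENNReal.one_ne_top ?_
    rw [← key x]; exact le_add_self
  have hIic_ne_top : ∀ x : ℝ, (∫⁻ t in Set.Iic x, ENNReal.ofReal (k t)) ≠ ⊤ := by
    intro x
    refine ne_top_of_le_ne_top ENNReal.one_ne_top ?_
    rw [← key x]; exact le_self_add
  have hK_eq : ∀ x : ℝ, 1 - K x = (∫⁻ t in Set.Ioi x, ENNReal.ofReal (k t)).toReal := by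
    intro x
    have h := key x
    have h' : (∫⁻ t in Set.Iic x, ENNReal.ofReal (k t)).toReal
        + (∫⁻ t in Set.Ioi x, ENNReal.ofReal (k t)).toReal = 1 := by
      rw [← ENNReal.toReal_add (hIic_ne_top x) (hIoi_ne_top x), h, ENNReal.toReal_one]
    rw [hK x]; linarith
  have hT_pos : ∀ x : ℝ, 0 < 1 - K x := by
    intro x
    rw [hK_eq x]
    exact ENNReal.toReal_pos (hIoi_pos x).ne' (hIoi_ne_top x)
  have hT_anti : ∀ u v : ℝ, u ≤ v → 1 - K v ≤ 1 - K u := by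
    intro u v huv
    rw [hK_eq u, hK_eq v]
    exact ENNReal.toReal_mono (hIoi_ne_top u) (lintegral_mono_set (Ioi_subset_Ioi huv))
  -- mixture tail decomposition
  have hFdec : ∀ x : ℝ, 1 - F x = ∑ i, w i * (1 - K ((x - μ i) / σ i)) := by
    intro x
    rw [hF x]
    calc 1 - ∑ i, w i * K ((x - μ i) / σ i)
        = ∑ i, w i - ∑ i, w i * K ((x - μ i) / σ i) := by rw [hwsum]
      _ = ∑ i, (w i - w i * K ((x - μ i) / σ i)) := (Finset.sum_sub_distrib _ _).symm
      _ = ∑ i, w i * (1 - K ((x - μ i) / σ i)) := Finset.sum_congr rfl fun i _ => by ring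
  have hFx_pos : ∀ x : ℝ, 0 < 1 - F x := by
    intro x
    rw [hFdec x]
    exact Finset.sum_pos (fun i _ => mul_pos (hw i) (hT_pos _)) ⟨⟨0, hN⟩, Finset.mem_univ _⟩
  -- constants
  set i0 : Fin N := ⟨0, hN⟩ with hi0
  have hNe : (Finset.univ : Finset (Fin N)).Nonempty := ⟨i0, Finset.mem_univ _⟩
  set a : ℝ := Finset.univ.sup' hNe μ with ha
  set b : ℝ := Finset.univ.sup' hNe σ with hbdef
  have hb : 0 < b := lt_of_lt_of_le (hσ i0) (Finset.le_sup' σ (Finset.mem_univ i0))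
  -- limits of the bounding functions
  have hlow := tail_comp K αK hαK a b hb
  have hup1 := tail_comp K αK hαK (μ i0) (σ i0) (hσ i0)
  have hc : Tendsto (fun x : ℝ => -Real.log (w i0) / Real.log x) atTop (nhds 0) := by
    have h2 : Tendsto (fun x : ℝ => (Real.log x)⁻¹) atTop (nhds 0) :=
      tendsto_inv_atTop_zero.comp Real.tendsto_log_atTop
    have := h2.const_mul (-Real.log (w i0))
    rw [mul_zero] at this
    exact this.congr fun x => (div_eq_mul_inv _ _).symm
  have hup := ereal_tendsto_add_zero hup1 hc
  refine tendsto_of_tendsto_of_tendsto_of_le_of_le' hlow hup ?_ ?_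
  · -- lower bound
    filter_upwards [eventually_ge_atTop (2 : ℝ), eventually_ge_atTop a] with x hx2 hxa
    rw [EReal.coe_le_coe_iff]
    have hlx : 0 < Real.log x := Real.log_pos (by linarith)
    have hsum_le : 1 - F x ≤ 1 - K ((x - a) / b) := by
      rw [hFdec x]
      have hstep : ∀ i : Fin N, (x - a) / b ≤ (x - μ i) / σ i := by
        intro i
        have hμ : μ i ≤ a := Finset.le_sup' μ (Finset.mem_univ i)
        have hσ' : σ i ≤ b := Finset.le_sup' σ (Finset.mem_univ i)
        exact div_le_div₀ (by linarith) (by linarith) (hσ i) hσ'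
      calc ∑ i, w i * (1 - K ((x - μ i) / σ i))
          ≤ ∑ i, w i * (1 - K ((x - a) / b)) :=
            Finset.sum_le_sum fun i _ =>
              mul_le_mul_of_nonneg_left (hT_anti _ _ (hstep i)) (hw i).le
        _ = 1 - K ((x - a) / b) := by rw [← Finset.sum_mul, hwsum, one_mul]
    have hlog := Real.log_le_log (hFx_pos x) hsum_le
    exact (div_le_div_iff_of_pos_right hlx).2 (neg_le_neg hlog)
  · -- upper bound
    filter_upwards [eventually_ge_atTop (2 : ℝ)] with x hx2
    rw [EReal.coe_le_coe_iff]
    have hlx : 0 < Real.log x := Real.log_pos (by linarith)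
    have hpos0 : 0 < w i0 * (1 - K ((x - μ i0) / σ i0)) := mul_pos (hw i0) (hT_pos _)
    have hle : w i0 * (1 - K ((x - μ i0) / σ i0)) ≤ 1 - F x := by
      rw [hFdec x]
      exact Finset.single_le_sum (f := fun i => w i * (1 - K ((x - μ i) / σ i)))
        (fun i _ => (mul_pos (hw i) (hT_pos _)).le) (Finset.mem_univ i0)
    have hlog := Real.log_le_log hpos0 hle
    rw [Real.log_mul (hw i0).ne' (hT_pos _).ne'] at hlog
    rw [← add_div]
    exact (div_le_div_iff_of_pos_right hlx).2 (by linarith)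
end

section
/- Suppose a survival function has the Pareto-mixture form F̄(x) = w·x^{-α₁} + (1-w)·∫_{[α₁+τ, ∞)} x^{-α} dH(α) for x ≥ 1, where w ∈ (0,1], α₁ > 0, τ > 0, and H is a probability measure supported on [α₁+τ, +∞). Then the right tail index of F equals α₁: lim_{x→+∞} (-log F̄(x))/log x = α₁. -/
open MeasureTheory Filter Set

theorem stmt_16 (w α₁ τ : ℝ) (hw : 0 < w) (hw1 : w ≤ 1) (hα : 0 < α₁) (hτ : 0 < τ)
    (H : Measure ℝ) [IsProbabilityMeasure H] (hsupp : H (Set.Iio (α₁ + τ)) = 0) :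
    Tendsto (fun x : ℝ =>
        -Real.log (w * x ^ (-α₁) + (1 - w) * ∫ α, x ^ (-α) ∂H) / Real.log x)
      atTop (nhds α₁) := by
  have hae : ∀ᵐ α ∂H, α₁ + τ ≤ α := by
    rw [ae_iff]
    simpa [not_le, Set.Iio] using hsupp
  -- key pointwise bounds for x > 1
  have key : ∀ x : ℝ, 1 < x →
      α₁ ≤ -Real.log (w * x ^ (-α₁) + (1 - w) * ∫ α, x ^ (-α) ∂H) / Real.log x ∧
      -Real.log (w * x ^ (-α₁) + (1 - w) * ∫ α, x ^ (-α) ∂H) / Real.log x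
        ≤ α₁ + (-Real.log w) / Real.log x := by
    intro x hx
    have hx0 : (0:ℝ) < x := lt_trans one_pos hx
    have hlx : 0 < Real.log x := Real.log_pos hx
    set I := ∫ α, x ^ (-α) ∂H with hI
    have hmeas : Continuous fun α : ℝ => x ^ (-α) := by
      have : (fun α : ℝ => x ^ (-α)) = fun α => Real.exp (Real.log x * (-α)) := by
        funext α; rw [Real.rpow_def_of_pos hx0]
      rw [this]
      exact Real.continuous_exp.comp (continuous_const.mul continuous_neg)
    have hint : Integrable (fun α : ℝ => x ^ (-α)) H := by
      refine Integrable.mono' (integrable_const 1) hmeas.aestronglyMeasurable ?_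
      filter_upwards [hae] with α hα'
      rw [Real.norm_of_nonneg (Real.rpow_nonneg hx0.le _)]
      exact Real.rpow_le_one_of_one_le_of_nonpos hx.le
        (by nlinarith)
    have hI0 : 0 ≤ I := integral_nonneg fun α => Real.rpow_nonneg hx0.le _
    have hIle : I ≤ x ^ (-α₁) := by
      have : I ≤ ∫ _, x ^ (-α₁) ∂H := by
        refine integral_mono_ae hint (integrable_const _) ?_
        filter_upwards [hae] with α hα'
        exact Real.rpow_le_rpow_of_exponent_le hx.le (by nlinarith)
      simpa using this
    have hrpos : 0 < x ^ (-α₁) := Real.rpow_pos_of_pos hx0 _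
    set Fb := w * x ^ (-α₁) + (1 - w) * I with hFb
    have hFbpos : 0 < Fb := by
      have : 0 ≤ (1 - w) * I := mul_nonneg (by linarith) hI0
      nlinarith
    have hlow : w * x ^ (-α₁) ≤ Fb := by
      have : 0 ≤ (1 - w) * I := mul_nonneg (by linarith) hI0
      linarith [hFb]
    have hhigh : Fb ≤ x ^ (-α₁) := by
      have : (1 - w) * I ≤ (1 - w) * x ^ (-α₁) :=
        mul_le_mul_of_nonneg_left hIle (by linarith)
      nlinarith
    have hlogr : Real.log (x ^ (-α₁)) = -α₁ * Real.log x := Real.log_rpow hx0 _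
    have h1 : Real.log Fb ≤ -α₁ * Real.log x := by
      rw [← hlogr]; exact Real.log_le_log hFbpos hhigh
    have h2 : Real.log w + -α₁ * Real.log x ≤ Real.log Fb := by
      have := Real.log_le_log (mul_pos hw hrpos) hlow
      rwa [Real.log_mul hw.ne' hrpos.ne', hlogr] at this
    constructor
    · rw [le_div_iff₀ hlx]; linarith
    · rw [div_le_iff₀ hlx]
      have : (α₁ + -Real.log w / Real.log x) * Real.log x
          = α₁ * Real.log x + -Real.log w := by
        field_simp
      rw [this]; linarith
  have hup : Tendsto (fun x : ℝ => α₁ + -Real.log w / Real.log x) atTop (nhds α₁) := by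
    have h0 : Tendsto (fun x : ℝ => (Real.log x)⁻¹) atTop (nhds 0) :=
      Real.tendsto_log_atTop.inv_tendsto_atTop
    have : Tendsto (fun x : ℝ => α₁ + -Real.log w * (Real.log x)⁻¹) atTop
        (nhds (α₁ + -Real.log w * 0)) :=
      tendsto_const_nhds.add (tendsto_const_nhds.mul h0)
    simpa [div_eq_mul_inv] using this
  refine tendsto_of_tendsto_of_tendsto_of_le_of_le' tendsto_const_nhds hup ?_ ?_
  · filter_upwards [eventually_gt_atTop 1] with x hx using (key x hx).1
  · filter_upwards [eventually_gt_atTop 1] with x hx using (key x hx).2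
end
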